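/- arXiv:1412.8733 — 9 statements merged into one kernel-verified Lean document; each statement's English description precedes it below -/
import Mathlib

section
/- Let K be a field of characteristic p > 0, and let δ : K[x] → K[x] be the K-linear map F(x) ↦ F(x+1) - F(x), and N : K[x] → K[x] be the K-linear map F(x) ↦ F(x) + F(x+1) + ... + F(x+p-1). Then the image of δ equals the kernel of N. -/
open Polynomial

section Aux

variable {K : Type*} [Field K]

/-- The shift operator `F ↦ F(X+1)` as a `K`-linear endomorphism. -/
noncomputable def Tshift (K : Type*) [Field K] : Module.End K (Polynomial K) :=
  (Polynomial.aeval (X + 1 : Polynomial K)).toLinearMap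

lemma Tshift_apply (F : Polynomial K) : Tshift K F = F.comp (X + 1) := by
  simp only [Tshift, AlgHom.toLinearMap_apply, aeval_def, Polynomial.algebraMap_eq]
  rfl

lemma Tshift_pow_apply (k : ℕ) (F : Polynomial K) :
    ((Tshift K) ^ k) F = F.comp (X + C (k : K)) := by
  induction k with
  | zero => simp
  | succ n ih =>
    have h : ((Tshift K) ^ (n + 1)) F = Tshift K (((Tshift K) ^ n) F) := by
      rw [pow_succ']; rfl
    rw [h, ih, Tshift_apply, comp_assoc]
    congr 1
    push_cast
    simp [add_comp]
    ring

lemma delta_apply (F : Polynomial K) : (Tshift K - 1) F = F.comp (X + 1) - F := by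
  simp [Tshift_apply]

variable (p : ℕ) [hp : Fact p.Prime] [hchar : CharP K p]

lemma poly_identity :
    ((X : Polynomial K) - 1) ^ (p - 1) = ∑ k ∈ Finset.range p, (X : Polynomial K) ^ k := by
  have hX : (X : Polynomial K) - 1 ≠ 0 := by
    have := Polynomial.X_sub_C_ne_zero (R := K) (1 : K)
    simpa using this
  apply mul_right_cancel₀ hX
  rw [geom_sum_mul, ← pow_succ]
  rw [Nat.sub_add_cancel hp.out.one_lt.le]
  rw [sub_pow_char]
  simp

omit hp in
lemma Tshift_pow_p : (Tshift K) ^ p = 1 := by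
  apply LinearMap.ext
  intro F
  rw [Tshift_pow_apply]
  rw [CharP.cast_eq_zero K p]
  simp

lemma delta_pow_p : ((Tshift K) - 1) ^ p = 0 := by
  have h : ((X : Polynomial K) - 1) ^ p = X ^ p - 1 := by
    rw [sub_pow_char]; simp
  have := congrArg (Polynomial.aeval (Tshift K)) h
  simpa [Tshift_pow_p] using this

lemma delta_pow_eq_sum : ((Tshift K) - 1) ^ (p - 1) = ∑ k ∈ Finset.range p, (Tshift K) ^ k := by
  have := congrArg (Polynomial.aeval (Tshift K)) (poly_identity (K := K) p)
  simpa using this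

end Aux

section Deg

variable {K : Type*} [Field K]

lemma coeff_comp_sum (F : Polynomial K) (n k : ℕ) (hdeg : F.natDegree ≤ n) :
    (F.comp (X + 1)).coeff k = ∑ e ∈ Finset.range (n + 1), F.coeff e * (e.choose k : K) := by
  rw [comp_eq_sum_left, Polynomial.sum_def, finset_sum_coeff]
  have hsub : F.support ⊆ Finset.range (n + 1) := by
    intro e he
    rw [Finset.mem_range]
    exact lt_of_le_of_lt (le_natDegree_of_ne_zero (mem_support_iff.mp he)) (Nat.lt_succ_of_le hdeg)
  rw [Finset.sum_subset hsub]
  · apply Finset.sum_congr rfl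
    intro e _
    rw [coeff_C_mul, coeff_X_add_one_pow]
  · intro e _ he
    rw [notMem_support_iff.mp he]
    simp

lemma delta_coeff_eq_zero (F : Polynomial K) (k : ℕ) (hk : F.natDegree ≤ k) :
    (F.comp (X + 1) - F).coeff k = 0 := by
  rw [coeff_sub, coeff_comp_sum F k k hk]
  rw [Finset.sum_range_succ]
  have h1 : ∀ e ∈ Finset.range k, F.coeff e * (e.choose k : K) = 0 := by
    intro e he
    rw [Nat.choose_eq_zero_of_lt (Finset.mem_range.mp he)]
    simp
  rw [Finset.sum_eq_zero h1]
  simp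

lemma delta_coeff_pred (F : Polynomial K) (n : ℕ) (hn : F.natDegree ≤ n + 1) :
    (F.comp (X + 1) - F).coeff n = (n + 1 : K) * F.coeff (n + 1) := by
  rw [coeff_sub, coeff_comp_sum F (n + 1) n hn]
  rw [Finset.sum_range_succ, Finset.sum_range_succ]
  have h1 : ∀ e ∈ Finset.range n, F.coeff e * (e.choose n : K) = 0 := by
    intro e he
    rw [Nat.choose_eq_zero_of_lt (Finset.mem_range.mp he)]
    simp
  rw [Finset.sum_eq_zero h1]
  rw [Nat.choose_succ_self_right, Nat.choose_self]
  push_cast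
  ring


lemma delta_facts (F : Polynomial K) (n : ℕ) (hF : F.natDegree = n + 1)
    (hn : ((n + 1 : ℕ) : K) ≠ 0) (hF0 : F ≠ 0) :
    (F.comp (X + 1) - F) ≠ 0 ∧ (F.comp (X + 1) - F).natDegree = n ∧
      (F.comp (X + 1) - F).leadingCoeff = ((n + 1 : ℕ) : K) * F.leadingCoeff := by
  have hc : (F.comp (X + 1) - F).coeff n = ((n + 1 : ℕ) : K) * F.coeff (n + 1) := by
    have h := delta_coeff_pred F n (le_of_eq hF)
    push_cast at h ⊢
    exact h
  have hlcF : F.coeff (n + 1) = F.leadingCoeff := by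
    rw [← hF]; rfl
  have hcne : (F.comp (X + 1) - F).coeff n ≠ 0 := by
    rw [hc, hlcF]
    exact mul_ne_zero hn (leadingCoeff_ne_zero.mpr hF0)
  have hne : (F.comp (X + 1) - F) ≠ 0 := fun h => hcne (by rw [h]; simp)
  have hle : (F.comp (X + 1) - F).natDegree ≤ n := by
    rw [natDegree_le_iff_coeff_eq_zero]
    intro N hN
    exact delta_coeff_eq_zero F N (by omega)
  have hdeg : (F.comp (X + 1) - F).natDegree = n :=
    le_antisymm hle (le_natDegree_of_ne_zero hcne)
  refine ⟨hne, hdeg, ?_⟩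
  rw [← hlcF, ← hc, leadingCoeff, hdeg]

lemma main_surj {p : ℕ} [hp : Fact p.Prime] [hchar : CharP K p] (n : ℕ) :
    ∀ G : Polynomial K, G.natDegree ≤ n → ((Tshift K - 1) ^ (p - 1)) G = 0 →
      ∃ F : Polynomial K, F.comp (X + 1) - F = G := by
  induction n using Nat.strong_induction_on with
  | _ n IH =>
  intro G hGn hGker
  by_cases hG0 : G = 0
  · exact ⟨0, by simp [hG0]⟩
  set m := G.natDegree with hm
  by_cases hdvd : p ∣ (m + 1)
  · exfalso
    have hmp : p ≤ m + 1 := Nat.le_of_dvd (Nat.succ_pos m) hdvd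
    have hp2 : 2 ≤ p := hp.out.two_le
    have claim : ∀ k, k ≤ p - 1 →
        ((Tshift K - 1) ^ k) G ≠ 0 ∧ (((Tshift K - 1) ^ k) G).natDegree = m - k := by
      intro k
      induction k with
      | zero => intro _; simpa [← hm] using hG0
      | succ k ihk =>
        intro hk
        obtain ⟨h1, h2⟩ := ihk (le_trans (Nat.le_succ k) hk)
        set H := ((Tshift K - 1) ^ k) G with hH
        have hkm : k + 1 ≤ m := by omega
        have hHdeg : H.natDegree = (m - (k + 1)) + 1 := by omega
        have hndvd : ¬ p ∣ (m - k) := by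
          intro hdk
          have h3 : p ∣ (m + 1) - (m - k) := Nat.dvd_sub hdvd hdk
          have h4 : (m + 1) - (m - k) = k + 1 := by omega
          rw [h4] at h3
          have := Nat.le_of_dvd (Nat.succ_pos k) h3
          omega
        have hcast : (((m - (k + 1)) + 1 : ℕ) : K) ≠ 0 := by
          have heq : (m - (k + 1)) + 1 = m - k := by omega
          rw [heq]
          intro hz
          exact hndvd ((CharP.cast_eq_zero_iff K p _).mp hz)
        obtain ⟨hne, hdeg, _⟩ := delta_facts H (m - (k + 1)) hHdeg hcast h1
        have happ : ((Tshift K - 1) ^ (k + 1)) G = H.comp (X + 1) - H := by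
          rw [pow_succ', Module.End.mul_apply, ← hH, delta_apply]
        rw [happ]
        exact ⟨hne, hdeg⟩
    obtain ⟨h1, _⟩ := claim (p - 1) le_rfl
    exact h1 hGker
  · have hm1 : (((m + 1 : ℕ)) : K) ≠ 0 := by
      intro hz
      exact hdvd ((CharP.cast_eq_zero_iff K p _).mp hz)
    have hc : G.leadingCoeff ≠ 0 := leadingCoeff_ne_zero.mpr hG0
    set a := G.leadingCoeff / (((m + 1 : ℕ)) : K) with ha_def
    have ha : a ≠ 0 := div_ne_zero hc hm1
    set F0 : Polynomial K := Polynomial.C a * X ^ (m + 1) with hF0_def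
    have hF0ne : F0 ≠ 0 := by
      rw [hF0_def]
      exact mul_ne_zero (by simpa using ha) (pow_ne_zero _ X_ne_zero)
    have hF0deg : F0.natDegree = m + 1 := natDegree_C_mul_X_pow _ a ha
    have hF0lc : F0.leadingCoeff = a := by
      rw [hF0_def]
      simp [leadingCoeff, natDegree_C_mul_X_pow _ a ha, coeff_C_mul, coeff_X_pow]
    obtain ⟨hD0, hDdeg, hDlc⟩ := delta_facts F0 m hF0deg hm1 hF0ne
    set D := F0.comp (X + 1) - F0 with hD_def
    have hDlc' : D.leadingCoeff = G.leadingCoeff := by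
      have hm1' : ((m : K) + 1) ≠ 0 := by push_cast at hm1; exact hm1
      rw [hDlc, hF0lc, ha_def]
      push_cast
      rw [mul_div_assoc']
      exact mul_div_cancel_left₀ _ hm1' 
    set G' := G - D with hG'_def
    have hDker : ((Tshift K - 1) ^ (p - 1)) D = 0 := by
      have hD : D = (Tshift K - 1) F0 := (delta_apply F0).symm
      rw [hD, ← Module.End.mul_apply, ← pow_succ, Nat.sub_add_cancel hp.out.one_lt.le,
        delta_pow_p]
      rfl
    have hker' : ((Tshift K - 1) ^ (p - 1)) G' = 0 := by
      rw [hG'_def, map_sub, hGker, hDker, sub_zero]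
    by_cases hG'0 : G' = 0
    · exact ⟨F0, by rw [← hD_def, ← sub_eq_zero, ← neg_sub G D, ← hG'_def, hG'0, neg_zero]⟩
    · have hdegeq : G.degree = D.degree := by
        rw [degree_eq_natDegree hG0, degree_eq_natDegree hD0, hDdeg]
      have hlt : G'.degree < G.degree := degree_sub_lt hdegeq hG0 hDlc'.symm
      have hnat : G'.natDegree < m := natDegree_lt_natDegree hG'0 hlt
      obtain ⟨F1, hF1⟩ := IH G'.natDegree (lt_of_lt_of_le hnat hGn) G' le_rfl hker'
      refine ⟨F0 + F1, ?_⟩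
      rw [add_comp]
      have : F0.comp (X + 1) + F1.comp (X + 1) - (F0 + F1) =
          (F0.comp (X + 1) - F0) + (F1.comp (X + 1) - F1) := by ring
      rw [this, hF1, ← hD_def, hG'_def]
      ring

end Deg

theorem stmt_0 (K : Type*) [Field K] (p : ℕ) (hp : 0 < p) (hchar : CharP K p)
    (G : Polynomial K) :
    (∃ F : Polynomial K, F.comp (X + 1) - F = G) ↔
      (∑ k ∈ Finset.range p, G.comp (X + C (k : K))) = 0 := by
  haveI := hchar
  haveI : NeZero p := ⟨hp.ne'⟩
  haveI hfp : Fact p.Prime := CharP.char_is_prime_of_pos K p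
  have hsum : (∑ k ∈ Finset.range p, G.comp (X + C (k : K))) =
      ((Tshift K - 1) ^ (p - 1)) G := by
    rw [delta_pow_eq_sum, LinearMap.sum_apply]
    simp [Tshift_pow_apply]
  rw [hsum]
  constructor
  · rintro ⟨F, rfl⟩
    have hF : F.comp (X + 1) - F = (Tshift K - 1) F := (delta_apply F).symm
    rw [hF, ← Module.End.mul_apply, ← pow_succ, Nat.sub_add_cancel hfp.out.one_lt.le,
      delta_pow_p]
    rfl
  · intro h
    exact main_surj G.natDegree G le_rfl h
end

section
/- Let K be a field of characteristic p > 0, let V ⊆ K[x] be the K-subspace of polynomials of the form x^{p-1} P(x^p) for P ∈ K[x], and let N : K[x] → K[x] be F(x) ↦ Σ_{k=0}^{p-1} F(x+k). Then V ∩ Ker(N) = {0}. -/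
open Polynomial

theorem stmt_1 (K : Type*) [Field K] (p : ℕ) (hp : 0 < p) (hchar : CharP K p)
    (F : Polynomial K)
    (hV : ∃ P : Polynomial K, F = X ^ (p - 1) * P.comp (X ^ p))
    (hN : (∑ k ∈ Finset.range p, F.comp (X + C (k : K))) = 0) :
    F = 0 := by
  obtain ⟨P, rfl⟩ := hV
  have hprime : p.Prime := by
    rcases CharP.char_is_prime_or_zero K p with h | h
    · exact h
    · omega
  haveI : Fact p.Prime := ⟨hprime⟩
  -- Fermat facts for natural number casts
  have hkp : ∀ k : ℕ, ((k : K)) ^ p = (k : K) := by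
    intro k
    have h1 : ((k : K)) = (ZMod.castHom (dvd_refl p) K) ((k : ZMod p)) := (map_natCast _ k).symm
    rw [h1, ← map_pow, ZMod.pow_card]
  have hk1 : ∀ k : ℕ, 0 < k → k < p → ((k : K)) ^ (p - 1) = 1 := by
    intro k h0 hklt
    have h1 : ((k : K)) = (ZMod.castHom (dvd_refl p) K) ((k : ZMod p)) := (map_natCast _ k).symm
    have hz : (k : ZMod p) ≠ 0 := by
      rw [Ne, ZMod.natCast_eq_zero_iff]
      intro hd
      exact absurd (Nat.le_of_dvd h0 hd) (by omega)
    rw [h1, ← map_pow, ZMod.pow_card_sub_one_eq_one hz, map_one]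
  set Pk : ℕ → Polynomial K := fun k => P.comp (X ^ p + C (k : K)) with hPkdef
  have hcomp : ∀ k : ℕ, (X ^ (p-1) * P.comp (X ^ p)).comp (X + C (k : K))
      = (X + C (k : K)) ^ (p - 1) * Pk k := by
    intro k
    rw [mul_comp, X_pow_comp, comp_assoc, X_pow_comp]
    congr 2
    rw [add_pow_char, ← C_pow, hkp]
  have hPkder : ∀ k : ℕ, derivative (Pk k) = 0 := by
    intro k
    rw [hPkdef]
    simp only [derivative_comp, derivative_add, derivative_C, derivative_X_pow, add_zero]
    rw [CharP.cast_eq_zero K p]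
    simp
  set H : ℕ → Polynomial K := fun m => ∑ k ∈ Finset.range p, (X + C (k:K))^m * Pk k with hHdef
  have hHd : ∀ m : ℕ, derivative (H (m+1)) = C (((m+1 : ℕ)) : K) * H m := by
    intro m
    rw [hHdef]
    simp only [derivative_sum, derivative_mul, hPkder, mul_zero, add_zero,
      derivative_pow, derivative_add, derivative_X, derivative_C, add_zero, mul_one,
      Nat.add_sub_cancel]
    rw [Finset.mul_sum]
    refine Finset.sum_congr rfl fun k _ => ?_
    push_cast
    ring
  have hHtop : H (p-1) = 0 := by
    rw [hHdef]
    rw [← hN]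
    exact (Finset.sum_congr rfl fun k _ => (hcomp k).symm)
  have hdown : ∀ j : ℕ, H (p - 1 - j) = 0 := by
    intro j
    induction j with
    | zero => simpa using hHtop
    | succ j ih =>
      by_cases hj : p - 1 - j = 0
      · rw [show p - 1 - (j+1) = 0 by omega, ← hj]
        exact ih
      · have hs : p - 1 - j = (p - 1 - (j+1)) + 1 := by omega
        have hd := hHd (p - 1 - (j+1))
        rw [← hs, ih, derivative_zero] at hd
        have hc : (((p - 1 - j : ℕ)) : K) ≠ 0 := by
          rw [Ne, CharP.cast_eq_zero_iff K p]
          intro hdvd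
          have := Nat.le_of_dvd (by omega) hdvd
          omega
        have := hd.symm
        rcases mul_eq_zero.mp this with h | h
        · exact absurd (C_eq_zero.mp h) hc
        · exact h
  have hall : ∀ m : ℕ, m ≤ p - 1 → H m = 0 := by
    intro m hm
    have := hdown (p - 1 - m)
    rwa [show p - 1 - (p - 1 - m) = m by omega] at this
  have hG : ∀ j : ℕ, j ≤ p - 1 → (∑ k ∈ Finset.range p, (C ((k:K)))^j * Pk k) = 0 := by
    intro j
    induction j using Nat.strong_induction_on with
    | _ j ih =>
      intro hj
      have hHj := hall j hj
      have hexp : H j = ∑ i ∈ Finset.range (j+1),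
          (X:Polynomial K)^i * ((j.choose i : ℕ) : Polynomial K) *
            ∑ k ∈ Finset.range p, (C ((k:K)))^(j-i) * Pk k := by
        rw [hHdef]
        simp only [add_pow, Finset.sum_mul]
        rw [Finset.sum_comm]
        refine Finset.sum_congr rfl fun i hi => ?_
        rw [Finset.mul_sum]
        refine Finset.sum_congr rfl fun k _ => ?_
        ring
      have hsingle : ∀ i ∈ Finset.range (j+1), i ≠ 0 →
          (X:Polynomial K)^i * ((j.choose i : ℕ) : Polynomial K) *
            (∑ k ∈ Finset.range p, (C ((k:K)))^(j-i) * Pk k) = 0 := by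
        intro i hi hi0
        have hi' := Finset.mem_range.mp hi
        rw [ih (j - i) (by omega) (by omega), mul_zero]
      rw [Finset.sum_eq_single 0 hsingle (fun h => absurd (Finset.mem_range.mpr (by omega)) h)] at hexp
      simp only [pow_zero, Nat.sub_zero, Nat.choose_zero_right, Nat.cast_one, one_mul, mul_one] at hexp
      rw [hHj] at hexp
      exact hexp.symm
  have hfinal : Pk 0 = 0 := by
    have hG0 := hG 0 (Nat.zero_le _)
    have hGp := hG (p-1) le_rfl
    have key : ∑ k ∈ Finset.range p, (1 - (C ((k:K)))^(p-1)) * Pk k = 0 := by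
      simp only [sub_mul, one_mul, Finset.sum_sub_distrib]
      rw [hGp, sub_zero]
      simpa using hG0
    rw [Finset.sum_eq_single 0 (fun k hk hk0 => by
      rw [← C_pow, hk1 k (Nat.pos_of_ne_zero hk0) (Finset.mem_range.mp hk), C_1, sub_self, zero_mul])
      (fun h => absurd (Finset.mem_range.mpr hp) h)] at key
    rw [Nat.cast_zero, C_0, zero_pow (by have := hprime.two_le; omega : p - 1 ≠ 0), sub_zero, one_mul] at key
    exact key
  have h0 : P.comp ((X:Polynomial K) ^ p) = 0 := by
    have := hfinal
    rw [hPkdef] at this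
    simpa using this
  rw [h0, mul_zero]
end

section
/- Let K be a field of characteristic p > 0, let V = {x^{p-1} P(x^p) : P ∈ K[x]} ⊆ K[x], and let δ : K[x] → K[x] be F(x) ↦ F(x+1) - F(x). Then K[x] = V ⊕ Im(δ), i.e., every polynomial in K[x] can be written uniquely as the sum of an element of V and an element of the image of δ. -/
open Polynomial

section Aux

variable {K : Type*} [Field K]

/-- coefficient of `H.comp (X+1)` as a sum of binomials. -/
lemma comp_X_add_one_coeff (H : K[X]) (j : ℕ) :
    (H.comp (X + 1)).coeff j = ∑ k ∈ H.support, H.coeff k * (k.choose j : K) := by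
  rw [Polynomial.comp, Polynomial.eval₂_eq_sum, Polynomial.sum_def, Polynomial.finset_sum_coeff]
  refine Finset.sum_congr rfl fun k _ => ?_
  rw [Polynomial.coeff_C_mul, Polynomial.coeff_X_add_one_pow]

lemma comp_X_add_one_coeff_natDegree (H : K[X]) :
    (H.comp (X + 1)).coeff H.natDegree = H.coeff H.natDegree := by
  rw [comp_X_add_one_coeff]
  rw [Finset.sum_eq_single H.natDegree]
  · by_cases h : H.natDegree ∈ H.support
    · simp
    · simp [Polynomial.notMem_support_iff.mp h]
  · intro b hb hbne
    have hble : b ≤ H.natDegree := Polynomial.le_natDegree_of_ne_zero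
      (Polynomial.mem_support_iff.mp hb)
    rw [Nat.choose_eq_zero_of_lt (lt_of_le_of_ne hble hbne)]
    simp
  · intro h
    simp [Polynomial.notMem_support_iff.mp h]

lemma comp_X_add_one_coeff_pred (H : K[X]) (hd : 1 ≤ H.natDegree) :
    (H.comp (X + 1)).coeff (H.natDegree - 1) =
      H.coeff (H.natDegree - 1) + (H.natDegree : K) * H.coeff H.natDegree := by
  set d := H.natDegree with hdd
  rw [comp_X_add_one_coeff]
  have hsub : H.support ⊆ Finset.range (d + 1) := by
    intro k hk
    simp only [Finset.mem_range]
    exact Nat.lt_succ_of_le (Polynomial.le_natDegree_of_ne_zero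
      (Polynomial.mem_support_iff.mp hk))
  rw [Finset.sum_subset hsub (by
    intro k _ hk
    simp [Polynomial.notMem_support_iff.mp hk])]
  have hd1 : d + 1 = (d - 1) + 1 + 1 := by omega
  rw [hd1, Finset.sum_range_succ, Finset.sum_range_succ]
  have : ∀ k ∈ Finset.range (d - 1), H.coeff k * ((k.choose (d-1) : ℕ) : K) = 0 := by
    intro k hk
    rw [Nat.choose_eq_zero_of_lt (Finset.mem_range.mp hk)]
    simp
  rw [Finset.sum_eq_zero this]
  have h2 : d - 1 + 1 = d := by omega
  rw [h2, Nat.choose_self]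
  have h3 := Nat.choose_succ_self_right (d - 1)
  rw [h2] at h3
  rw [h3]
  ring

/-- the finite difference has degree strictly less than `H`. -/
lemma delta_coeff_natDegree (H : K[X]) :
    (H.comp (X + 1) - H).coeff H.natDegree = 0 := by
  rw [Polynomial.coeff_sub, comp_X_add_one_coeff_natDegree, sub_self]

lemma delta_natDegree_le (H : K[X]) :
    (H.comp (X + 1) - H).natDegree ≤ H.natDegree := by
  refine le_trans (Polynomial.natDegree_sub_le _ _) (max_le ?_ le_rfl)
  refine le_trans (Polynomial.natDegree_comp_le) ?_
  have : (X + 1 : K[X]) = X + C 1 := by simp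
  rw [this, Polynomial.natDegree_X_add_C]
  simp

lemma delta_natDegree_lt (H : K[X]) (h : H.comp (X + 1) - H ≠ 0) :
    (H.comp (X + 1) - H).natDegree < H.natDegree := by
  rcases lt_or_eq_of_le (delta_natDegree_le H) with h' | h'
  · exact h'
  · exfalso
    apply h
    have := delta_coeff_natDegree H
    rw [← h'] at this
    exact Polynomial.leadingCoeff_eq_zero.mp this

end Aux

section Main

variable {K : Type*} [Field K] {p : ℕ}

/-- Uniqueness core: if a finite difference lies in `V`, it is zero. -/
lemma key_zero [CharP K p] (hp : Fact p.Prime) :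
    ∀ n : ℕ, ∀ H P : K[X], H.natDegree ≤ n →
      H.comp (X + 1) - H = X ^ (p - 1) * P.comp (X ^ p) →
      H.comp (X + 1) - H = 0 := by
  intro n
  induction n with
  | zero =>
    intro H P hH _
    have : H = C (H.coeff 0) := Polynomial.eq_C_of_natDegree_eq_zero (Nat.le_zero.mp hH)
    rw [this]; simp
  | succ n IH =>
    intro H P hH heq
    by_cases hD : H.comp (X + 1) - H = 0
    · exact hD
    by_cases hHn : H.natDegree ≤ n
    · exact IH H P hHn heq
    -- d = natDegree H = n + 1 ≥ 1
    have hd1 : 1 ≤ H.natDegree := by omega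
    set d := H.natDegree with hdd
    have hc : H.coeff d ≠ 0 := by
      intro h0
      have : H = 0 := Polynomial.leadingCoeff_eq_zero.mp h0
      apply hD; rw [this]; simp
    by_cases hpd : p ∣ d
    · -- replace H by H - C c * (X^p - X)^m
      obtain ⟨m, hm⟩ := hpd
      have hm1 : 1 ≤ m := by
        rcases Nat.eq_zero_or_pos m with h | h
        · subst h; simp at hm; omega
        · exact h
      have hp2 : 2 ≤ p := hp.out.two_le
      have hmonic : ((X : K[X]) ^ p - X).Monic := by
        apply Polynomial.monic_X_pow_sub
        rw [Polynomial.degree_X]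
        exact_mod_cast (by omega : 1 < p)
      have hWmonic : (((X : K[X]) ^ p - X) ^ m).Monic := hmonic.pow m
      have hXdeg : ((X : K[X]) ^ p - X).natDegree = p := by
        rw [Polynomial.natDegree_sub_eq_left_of_natDegree_lt
          (by simp [Polynomial.natDegree_X_pow]; omega), Polynomial.natDegree_X_pow]
      have hWdeg : (((X : K[X]) ^ p - X) ^ m).natDegree = d := by
        rw [hmonic.natDegree_pow, hXdeg, hm, Nat.mul_comm]
      -- invariance of X^p - X
      have hinv : (((X : K[X]) ^ p - X) ^ m).comp (X + 1) = ((X : K[X]) ^ p - X) ^ m := by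
        rw [Polynomial.pow_comp, Polynomial.sub_comp, Polynomial.pow_comp, Polynomial.X_comp]
        congr 1
        rw [add_pow_char (R := K[X]) (X) (1) (p := p)]
        simp
      set H' := H - C (H.coeff d) * ((X : K[X]) ^ p - X) ^ m with hH'
      have hdelta : H'.comp (X + 1) - H' = H.comp (X + 1) - H := by
        rw [hH', Polynomial.sub_comp, Polynomial.mul_comp, Polynomial.C_comp, hinv]
        ring
      by_cases hH'0 : H' = 0
      · rw [← hdelta, hH'0]
        simp only [Polynomial.zero_comp, sub_zero]
      have hHne : H ≠ 0 := fun h => hc (by rw [h]; simp)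
      have hWne : C (H.coeff d) * ((X : K[X]) ^ p - X) ^ m ≠ 0 := by
        apply mul_ne_zero
        · simpa using hc
        · exact hWmonic.ne_zero
      have hdegeq : H.degree = (C (H.coeff d) * ((X : K[X]) ^ p - X) ^ m).degree := by
        rw [Polynomial.degree_eq_natDegree hHne, Polynomial.degree_eq_natDegree hWne]
        congr 1
        rw [Polynomial.natDegree_mul (by simpa using hc) hWmonic.ne_zero, hWdeg,
          Polynomial.natDegree_C, Nat.zero_add]
      have hlceq : H.leadingCoeff = (C (H.coeff d) * ((X : K[X]) ^ p - X) ^ m).leadingCoeff := by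
        rw [Polynomial.leadingCoeff_mul, hWmonic.leadingCoeff, mul_one,
          Polynomial.leadingCoeff_C, Polynomial.leadingCoeff, ← hdd]
      have hdeglt : H'.degree < H.degree := by
        rw [hH']
        exact Polynomial.degree_sub_lt hdegeq hHne hlceq
      have hndeglt : H'.natDegree < d := Polynomial.natDegree_lt_natDegree hH'0 hdeglt
      have := IH H' P (by omega) (by rw [hdelta]; exact heq)
      rw [← hdelta]; exact this
    · -- p ∤ d : contradiction
      exfalso
      set D := H.comp (X + 1) - H with hDdef
      have hDlt : D.natDegree < d := delta_natDegree_lt H hD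
      have hcoeffD : D.coeff (d - 1) = (d : K) * H.coeff d := by
        rw [hDdef, Polynomial.coeff_sub, comp_X_add_one_coeff_pred H hd1]
        ring
      have hdK : (d : K) ≠ 0 := by
        intro h
        exact hpd ((CharP.cast_eq_zero_iff K p d).mp h)
      have hcD : D.coeff (d - 1) ≠ 0 := by
        rw [hcoeffD]; exact mul_ne_zero hdK hc
      have hDdeg : D.natDegree = d - 1 := by
        have h1 : d - 1 ≤ D.natDegree := Polynomial.le_natDegree_of_ne_zero hcD
        omega
      have hPne : P ≠ 0 := by
        intro h
        apply hD
        rw [heq, h]; simp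
      have hVdeg : D.natDegree = (p - 1) + P.natDegree * p := by
        rw [heq]
        rw [Polynomial.natDegree_mul (pow_ne_zero _ Polynomial.X_ne_zero)
          (by rw [← Polynomial.expand_eq_comp_X_pow]
              exact (Polynomial.expand_ne_zero hp.out.pos).mpr hPne)]
        rw [Polynomial.natDegree_X_pow, ← Polynomial.expand_eq_comp_X_pow,
          Polynomial.natDegree_expand]
      have hp2 : 2 ≤ p := hp.out.two_le
      apply hpd
      refine ⟨P.natDegree + 1, ?_⟩
      have hpn : p * (P.natDegree + 1) = P.natDegree * p + p := by ring
      omega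

/-- Existence of the decomposition. -/
lemma exists_decomp [CharP K p] (hp : Fact p.Prime) :
    ∀ n : ℕ, ∀ F : K[X], F.natDegree ≤ n →
      ∃ P H : K[X], F = X ^ (p - 1) * P.comp (X ^ p) + (H.comp (X + 1) - H) := by
  intro n
  induction n with
  | zero =>
    intro F hF
    refine ⟨0, C (F.coeff 0) * X, ?_⟩
    have hFC : F = C (F.coeff 0) := Polynomial.eq_C_of_natDegree_eq_zero (Nat.le_zero.mp hF)
    rw [Polynomial.zero_comp, mul_zero, zero_add, Polynomial.mul_comp, Polynomial.C_comp,
      Polynomial.X_comp]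
    nth_rewrite 1 [hFC]
    ring
  | succ n IH =>
    intro F hF
    by_cases hFn : F.natDegree ≤ n
    · exact IH F hFn
    have hd1 : 1 ≤ F.natDegree := by omega
    have hFne : F ≠ 0 := by
      intro h; rw [h, Polynomial.natDegree_zero] at hd1; omega
    set d := F.natDegree with hdd
    have hc : F.coeff d ≠ 0 := by
      have h := Polynomial.leadingCoeff_ne_zero.mpr hFne
      rwa [Polynomial.leadingCoeff, ← hdd] at h
    have hp2 : 2 ≤ p := hp.out.two_le
    by_cases hpd : p ∣ (d + 1)
    · -- leading term in V
      obtain ⟨m, hm⟩ := hpd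
      have hm1 : 1 ≤ m := by
        rcases Nat.eq_zero_or_pos m with h | h
        · subst h; simp at hm
        · exact h
      set G : K[X] := C (F.coeff d) * X ^ d with hG
      have hGV : G = X ^ (p - 1) * (C (F.coeff d) * X ^ (m - 1)).comp (X ^ p) := by
        obtain ⟨m', rfl⟩ : ∃ m', m = m' + 1 := ⟨m - 1, by omega⟩
        rw [Polynomial.mul_comp, Polynomial.C_comp, Polynomial.pow_comp, Polynomial.X_comp,
          ← pow_mul, hG]
        simp only [Nat.add_sub_cancel]
        have h1 : p * (m' + 1) = p * m' + p := by ring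
        have hexp : p - 1 + p * m' = d := by omega
        rw [mul_left_comm, ← pow_add, hexp]
      have hGne : G ≠ 0 := by
        apply mul_ne_zero (by simpa using hc) (pow_ne_zero _ Polynomial.X_ne_zero)
      have hdegeq : F.degree = G.degree := by
        rw [Polynomial.degree_eq_natDegree hFne, Polynomial.degree_eq_natDegree hGne]
        congr 1
        rw [hG, Polynomial.natDegree_C_mul (by simpa using hc), Polynomial.natDegree_X_pow]
      have hlceq : F.leadingCoeff = G.leadingCoeff := by
        rw [hG]
        rw [Polynomial.leadingCoeff_mul, Polynomial.leadingCoeff_X_pow, mul_one,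
          Polynomial.leadingCoeff_C, Polynomial.leadingCoeff, ← hdd]
      by_cases hF'0 : F - G = 0
      · refine ⟨C (F.coeff d) * X ^ (m - 1), 0, ?_⟩
        rw [← hGV, Polynomial.zero_comp, sub_zero, add_zero]
        exact sub_eq_zero.mp hF'0
      · have hdeglt : (F - G).degree < F.degree := Polynomial.degree_sub_lt hdegeq hFne hlceq
        have hndeglt : (F - G).natDegree < d := Polynomial.natDegree_lt_natDegree hF'0 hdeglt
        obtain ⟨P', H', hPH⟩ := IH (F - G) (by omega)
        refine ⟨P' + C (F.coeff d) * X ^ (m - 1), H', ?_⟩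
        rw [Polynomial.add_comp, mul_add, ← hGV]
        have : F = (F - G) + G := by ring
        rw [this, hPH]
        ring
    · -- leading term killed by delta of monomial
      have hu : ((d + 1 : ℕ) : K) ≠ 0 := by
        intro h
        exact hpd ((CharP.cast_eq_zero_iff K p (d+1)).mp h)
      set b : K := F.coeff d * ((d + 1 : ℕ) : K)⁻¹ with hb
      set H0 : K[X] := C b * X ^ (d + 1) with hH0
      set D0 : K[X] := H0.comp (X + 1) - H0 with hD0
      have hD0eq : D0 = C b * ((X + 1) ^ (d + 1) - X ^ (d + 1)) := by
        rw [hD0, hH0, Polynomial.mul_comp, Polynomial.C_comp, Polynomial.pow_comp,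
          Polynomial.X_comp]
        ring
      have hEdeg : ((X + 1 : K[X]) ^ (d + 1) - X ^ (d + 1)).natDegree ≤ d := by
        rw [Polynomial.natDegree_le_iff_coeff_eq_zero]
        intro N hN
        rw [Polynomial.coeff_sub, Polynomial.coeff_X_add_one_pow, Polynomial.coeff_X_pow]
        rcases eq_or_lt_of_le (Nat.succ_le_of_lt hN) with h | h
        · rw [← h]; simp
        · rw [Nat.choose_eq_zero_of_lt h]
          have : ¬ (N = d + 1) := by omega
          simp [this]
      have hEcoeff : ((X + 1 : K[X]) ^ (d + 1) - X ^ (d + 1)).coeff d = ((d + 1 : ℕ) : K) := by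
        rw [Polynomial.coeff_sub, Polynomial.coeff_X_add_one_pow, Polynomial.coeff_X_pow]
        rw [Nat.choose_succ_self_right]
        have hne : ¬ (d = d + 1) := by omega
        rw [if_neg hne, sub_zero]
      have hD0coeff : D0.coeff d = F.coeff d := by
        rw [hD0eq, Polynomial.coeff_C_mul, hEcoeff, hb]
        exact inv_mul_cancel_right₀ hu _
      have hD0ne : D0 ≠ 0 := by
        intro h
        rw [h] at hD0coeff
        simp at hD0coeff
        exact hc hD0coeff.symm
      have hD0deg : D0.natDegree = d := by
        have h1 : D0.natDegree ≤ d := by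
          rw [hD0eq]
          refine le_trans (Polynomial.natDegree_mul_le) ?_
          simpa using hEdeg
        have h2 : d ≤ D0.natDegree := Polynomial.le_natDegree_of_ne_zero (by
          rw [hD0coeff]; exact hc)
        omega
      have hdegeq : F.degree = D0.degree := by
        rw [Polynomial.degree_eq_natDegree hFne, Polynomial.degree_eq_natDegree hD0ne, hD0deg]
      have hlceq : F.leadingCoeff = D0.leadingCoeff := by
        rw [Polynomial.leadingCoeff, Polynomial.leadingCoeff, hD0deg, hD0coeff, hdd]
      by_cases hF'0 : F - D0 = 0
      · refine ⟨0, H0, ?_⟩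
        rw [← hD0]
        simp [sub_eq_zero.mp hF'0]
      · have hdeglt : (F - D0).degree < F.degree := Polynomial.degree_sub_lt hdegeq hFne hlceq
        have hndeglt : (F - D0).natDegree < d := Polynomial.natDegree_lt_natDegree hF'0 hdeglt
        obtain ⟨P', H', hPH⟩ := IH (F - D0) (by omega)
        refine ⟨P', H' + H0, ?_⟩
        rw [Polynomial.add_comp]
        have : F = (F - D0) + D0 := by ring
        rw [this, hPH, hD0]
        ring

end Main

theorem stmt_2 (K : Type*) [Field K] (p : ℕ) (hp : 0 < p) (hchar : CharP K p)
    (F : Polynomial K) :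
    ∃! GD : Polynomial K × Polynomial K,
      (∃ P : Polynomial K, GD.1 = X ^ (p - 1) * P.comp (X ^ p)) ∧
      (∃ H : Polynomial K, GD.2 = H.comp (X + 1) - H) ∧
      F = GD.1 + GD.2 := by
  have hprime : p.Prime := by
    rcases CharP.char_is_prime_or_zero K p with h | h
    · exact h
    · omega
  have hpfact : Fact p.Prime := ⟨hprime⟩
  obtain ⟨P₀, H₀, hF⟩ := exists_decomp (K := K) (p := p) hpfact F.natDegree F le_rfl
  refine ⟨(X ^ (p - 1) * P₀.comp (X ^ p), H₀.comp (X + 1) - H₀),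
    ⟨⟨P₀, rfl⟩, ⟨H₀, rfl⟩, hF⟩, ?_⟩
  rintro ⟨G, D⟩ ⟨⟨P, hP⟩, ⟨H, hH⟩, hFGD⟩
  simp only at hP hH hFGD
  -- difference lies in both V and image of delta
  have hdiff : (H₀ - H).comp (X + 1) - (H₀ - H) = X ^ (p - 1) * (P - P₀).comp (X ^ p) := by
    rw [Polynomial.sub_comp, Polynomial.sub_comp]
    have h1 : X ^ (p - 1) * P₀.comp (X ^ p) + (H₀.comp (X + 1) - H₀) =
        X ^ (p - 1) * P.comp (X ^ p) + (H.comp (X + 1) - H) := by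
      rw [← hF, hFGD, hP, hH]
    rw [mul_sub]
    linear_combination h1
  have hzero := key_zero (K := K) (p := p) hpfact (H₀ - H).natDegree (H₀ - H) (P - P₀)
    le_rfl hdiff
  have hD : D = H₀.comp (X + 1) - H₀ := by
    rw [hH]
    rw [Polynomial.sub_comp] at hzero
    linear_combination -hzero
  have hG : G = X ^ (p - 1) * P₀.comp (X ^ p) := by
    have := hFGD
    rw [hD] at this
    linear_combination hF - this
  rw [Prod.ext_iff]
  exact ⟨hG, hD⟩
end

section
/- Let K be a field of characteristic p > 0, let V = {x^{p-1} P(x^p) : P ∈ K[x]} ⊆ K[x], and let δ : K[x] → K[x] be F(x) ↦ F(x+1) - F(x). Then V + Im(δ) = K[x], i.e., every polynomial F ∈ K[x] can be written as F = G + δ(H) with G ∈ V and H ∈ K[x]. -/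
open Polynomial

private def Wsub (K : Type*) [Field K] (p : ℕ) : Submodule K (Polynomial K) where
  carrier := {F | ∃ P H : Polynomial K,
    F = X ^ (p - 1) * P.comp (X ^ p) + (H.comp (X + 1) - H)}
  add_mem' := by
    rintro a b ⟨P1, H1, rfl⟩ ⟨P2, H2, rfl⟩
    exact ⟨P1 + P2, H1 + H2, by simp only [add_comp]; ring⟩
  zero_mem' := ⟨0, 0, by simp⟩
  smul_mem' := by
    rintro c a ⟨P, H, rfl⟩
    exact ⟨c • P, c • H, by
      simp only [smul_comp, smul_add, smul_sub, Polynomial.smul_eq_C_mul, mul_comp, C_comp]; ring⟩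

private lemma helper_mem {K : Type*} [Field K] (p : ℕ) {n : ℕ}
    (hX : ∀ m < n, (X : Polynomial K) ^ m ∈ Wsub K p)
    {f : Polynomial K} (hf : f.degree < (n : ℕ)) : f ∈ Wsub K p := by
  rcases eq_or_ne f 0 with rfl | h0
  · exact zero_mem _
  · have hnd : f.natDegree < n := (natDegree_lt_iff_degree_lt h0).mpr hf
    rw [f.as_sum_range' n hnd]
    refine Submodule.sum_mem _ fun i hi => ?_
    rw [← C_mul_X_pow_eq_monomial, ← smul_eq_C_mul]
    exact Submodule.smul_mem _ _ (hX i (Finset.mem_range.mp hi))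

private lemma Xpow_mem {K : Type*} [Field K] (p : ℕ) (hp : 0 < p) (hchar : CharP K p)
    (n : ℕ) : (X : Polynomial K) ^ n ∈ Wsub K p := by
  induction n using Nat.strong_induction_on with
  | _ n ih =>
    by_cases hdvd : p ∣ (n + 1)
    · obtain ⟨k, hk⟩ := hdvd
      rcases k with _ | k'
      · omega
      refine ⟨X ^ k', 0, ?_⟩
      have hmul : p * (k' + 1) = p * k' + p := by ring
      rw [hmul] at hk
      have he : p - 1 + p * k' = n := by omega
      simp only [pow_comp, X_comp, zero_comp, sub_zero, add_zero, ← pow_mul, ← pow_add,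
        mul_comm p k']
      rw [mul_comm k' p, he]
    · have hne : ((n : K) + 1) ≠ 0 := by
        intro h
        apply hdvd
        rw [← CharP.cast_eq_zero_iff K p (n + 1)]
        push_cast
        exact h
      set c : K := ((n : K) + 1)⁻¹ with hc
      set D : Polynomial K := (X + 1) ^ (n + 1) - X ^ (n + 1) with hD
      have hcoeff : ∀ m, n ≤ m → ((X : Polynomial K) ^ n - c • D).coeff m = 0 := by
        intro m hm
        simp only [hD, coeff_sub, coeff_smul, coeff_X_add_one_pow, coeff_X_pow, smul_eq_mul]
        rcases lt_trichotomy m (n + 1) with h | h | h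
        · have hmn : m = n := by omega
          subst hmn
          rw [if_pos rfl, if_neg (by omega), Nat.choose_succ_self_right]
          push_cast
          rw [hc]
          field_simp
          ring
        · subst h
          rw [if_neg (by omega), if_pos rfl, Nat.choose_self]
          push_cast
          ring
        · rw [if_neg (by omega), if_neg (by omega), Nat.choose_eq_zero_of_lt (by omega)]
          push_cast
          ring
      have hdeg : ((X : Polynomial K) ^ n - c • D).degree < (n : ℕ) :=
        (degree_lt_iff_coeff_zero _ _).mpr hcoeff
      have h1 : (X : Polynomial K) ^ n - c • D ∈ Wsub K p :=
        helper_mem p (fun m hm => ih m hm) hdeg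
      have h2 : c • D ∈ Wsub K p := by
        refine ⟨0, c • X ^ (n + 1), ?_⟩
        simp only [hD, smul_comp, X_pow_comp, comp_zero, zero_comp, mul_zero, zero_add,
          smul_sub]
      have := add_mem h2 h1
      simpa using this

theorem stmt_3 (K : Type*) [Field K] (p : ℕ) (hp : 0 < p) (hchar : CharP K p)
    (F : Polynomial K) :
    ∃ (P H : Polynomial K),
      F = X ^ (p - 1) * P.comp (X ^ p) + (H.comp (X + 1) - H) := by
  have hF : F ∈ Wsub K p := by
    refine helper_mem p (n := F.natDegree + 1) (fun m _ => Xpow_mem p hp hchar m) ?_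
    exact lt_of_le_of_lt degree_le_natDegree (by exact_mod_cast Nat.lt_succ_self _)
  exact hF
end

section
/- Let K be a field of characteristic p > 0 and P ∈ K[x₂]. The automorphism f of the affine plane given by f(x₁, x₂) = (x₁ + x₂^{p-1} P(x₂^p), x₂ + 1) has order p (i.e., f^p = id) if and only if P = 0. -/
section
open Polynomial Finset
private theorem key {K : Type*} [Field K] {p : ℕ} [hpf : Fact p.Prime] [CharP K p]
    (P : Polynomial K)
    (h : ∑ k ∈ Finset.range p,
        (Polynomial.X + (k : Polynomial K)) ^ (p - 1)
          * Polynomial.aeval ((Polynomial.X + (k : Polynomial K)) ^ p) P = 0) :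
    P = 0 := by
  have hp2 : 2 ≤ p := hpf.out.two_le
  have hp0 : 0 < p := by omega
  set d := P.natDegree with hd
  -- rewrite each term
  have hterm : ∀ k : ℕ, (Polynomial.X + (k : Polynomial K)) ^ (p - 1)
      * Polynomial.aeval ((Polynomial.X + (k : Polynomial K)) ^ p) P
      = (Polynomial.X + C ((k : K))) ^ (p - 1)
        * expand K p (P.comp (Polynomial.X + C ((k : K)))) := by
    intro k
    have hck : ((k : Polynomial K)) = C ((k : K)) := by simp
    have hfrob : (Polynomial.X + C ((k : K))) ^ p = Polynomial.X ^ p + C ((k : K)) := by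
      rw [add_pow_char, ← C_pow]
      congr 1
      congr 1
      have : ((k : K)) = (ZMod.castHom (dvd_refl p) K) ((k : ZMod p)) := by simp
      rw [this, ← map_pow, ZMod.pow_card]
    rw [hck, ← comp_eq_aeval, hfrob, expand_eq_comp_X_pow, comp_assoc]
    congr 2
    simp
  rw [show (∑ k ∈ Finset.range p,
        (Polynomial.X + (k : Polynomial K)) ^ (p - 1)
          * Polynomial.aeval ((Polynomial.X + (k : Polynomial K)) ^ p) P)
      = ∑ k ∈ Finset.range p, (Polynomial.X + C ((k : K))) ^ (p - 1)
        * expand K p (P.comp (Polynomial.X + C ((k : K)))) from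
    Finset.sum_congr rfl fun k _ => hterm k] at h
  -- compute coefficient at p * d
  have hcoeff : ∀ a : K, ((Polynomial.X + C a) ^ (p - 1)
      * expand K p (P.comp (Polynomial.X + C a))).coeff (p * d)
      = a ^ (p - 1) * P.leadingCoeff := by
    intro a
    rw [coeff_mul]
    rw [Finset.sum_eq_single (0, p * d)]
    · have h1 : ((Polynomial.X + C a) ^ (p - 1)).coeff 0 = a ^ (p - 1) := by
        rw [coeff_zero_eq_eval_zero]
        simp
      have h2 : (expand K p (P.comp (Polynomial.X + C a))).coeff (p * d)
          = P.leadingCoeff := by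
        rw [coeff_expand hp0, if_pos (dvd_mul_right p d), Nat.mul_div_cancel_left d hp0]
        have hdeg : (Polynomial.X + C a).natDegree = 1 := natDegree_X_add_C a
        have := coeff_comp_degree_mul_degree (p := P) (q := Polynomial.X + C a)
          (by rw [hdeg]; exact one_ne_zero)
        rw [hdeg, mul_one] at this
        rw [this, (monic_X_add_C a).leadingCoeff, one_pow, mul_one]
      rw [h1, h2]
    · rintro ⟨i, j⟩ hmem hne
      rw [Finset.HasAntidiagonal.mem_antidiagonal] at hmem
      by_cases hj : p ∣ j
      · have hi : p ∣ i := (Nat.dvd_add_right hj).mp (by rw [add_comm i j] at hmem; rw [hmem]; exact dvd_mul_right p d)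
        have hi0 : i ≠ 0 := by
          rintro rfl
          exact hne (by simp at hmem; simp [hmem])
        have hip : p ≤ i := Nat.le_of_dvd (Nat.pos_of_ne_zero hi0) hi
        have : ((Polynomial.X + C a) ^ (p - 1)).coeff i = 0 := by
          apply coeff_eq_zero_of_natDegree_lt
          calc ((Polynomial.X + C a) ^ (p - 1)).natDegree ≤ (p-1) * (Polynomial.X + C a).natDegree := natDegree_pow_le
          _ = p - 1 := by rw [natDegree_X_add_C]; ring
          _ < i := by omega
        rw [this, zero_mul]
      · rw [coeff_expand hp0, if_neg hj, mul_zero]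
    · intro hmem
      exact absurd (Finset.HasAntidiagonal.mem_antidiagonal.mpr (by simp)) hmem
  have hsum : (∑ k ∈ Finset.range p, (Polynomial.X + C ((k : K))) ^ (p - 1)
      * expand K p (P.comp (Polynomial.X + C ((k : K))))).coeff (p * d)
      = (∑ k ∈ Finset.range p, ((k : K)) ^ (p - 1)) * P.leadingCoeff := by
    rw [finset_sum_coeff, Finset.sum_mul]
    exact Finset.sum_congr rfl fun k _ => hcoeff _
  rw [h, coeff_zero] at hsum
  -- compute the sum of (k : K)^(p-1)
  have hS : (∑ k ∈ Finset.range p, ((k : K)) ^ (p - 1)) = -1 := by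
    have : ∀ k ∈ Finset.range p, ((k : K)) ^ (p - 1) = 1 - (if k = 0 then (1:K) else 0) := by
      intro k hk
      rcases eq_or_ne k 0 with rfl | hk0
      · simp [zero_pow (show p - 1 ≠ 0 by omega)]
      · have hkz : ((k : ZMod p)) ≠ 0 := by
          rw [Ne, ZMod.natCast_eq_zero_iff]
          exact fun hdvd => hk0 (Nat.eq_zero_of_dvd_of_lt hdvd (Finset.mem_range.mp hk))
        have : ((k : K)) = (ZMod.castHom (dvd_refl p) K) ((k : ZMod p)) := by simp
        rw [this, ← map_pow, ZMod.pow_card_sub_one_eq_one hkz]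
        simp [hk0]
    rw [Finset.sum_congr rfl this, Finset.sum_sub_distrib, Finset.sum_const,
      Finset.sum_ite_eq' (Finset.range p) 0 (fun _ => (1:K)),
      if_pos (Finset.mem_range.mpr hp0), Finset.card_range, nsmul_eq_mul, mul_one,
      CharP.cast_eq_zero K p]
    ring
  rw [hS] at hsum
  have hlc : P.leadingCoeff = 0 := by
    have h2 := hsum.symm
    rwa [neg_one_mul, neg_eq_zero] at h2
  exact leadingCoeff_eq_zero.mp hlc

end

open MvPolynomial


theorem stmt_5 (K : Type*) [Field K] (p : ℕ) (hp : 0 < p) (hchar : CharP K p)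
    (P : Polynomial K) :
    (fun g : Fin 2 → MvPolynomial (Fin 2) K => fun i =>
        MvPolynomial.bind₁ g
          (![MvPolynomial.X 0 +
               MvPolynomial.X 1 ^ (p - 1) * Polynomial.aeval (MvPolynomial.X 1 ^ p) P,
             MvPolynomial.X 1 + 1] i))^[p] (fun i => MvPolynomial.X i)
      = (fun i => MvPolynomial.X i) ↔ P = 0 := by
  haveI : NeZero p := ⟨hp.ne'⟩
  haveI : Fact p.Prime := CharP.char_is_prime_of_pos K p
  set s : (Fin 2 → MvPolynomial (Fin 2) K) → (Fin 2 → MvPolynomial (Fin 2) K) :=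
    fun g => fun i =>
        MvPolynomial.bind₁ g
          (![MvPolynomial.X 0 +
               MvPolynomial.X 1 ^ (p - 1) * Polynomial.aeval (MvPolynomial.X 1 ^ p) P,
             MvPolynomial.X 1 + 1] i) with hs
  have hiter : ∀ n : ℕ, s^[n] (fun i => MvPolynomial.X i) =
      ![MvPolynomial.X 0 + ∑ k ∈ Finset.range n,
          (MvPolynomial.X 1 + (k : MvPolynomial (Fin 2) K)) ^ (p - 1)
            * Polynomial.aeval ((MvPolynomial.X 1 + (k : MvPolynomial (Fin 2) K)) ^ p) P,
        MvPolynomial.X 1 + (n : MvPolynomial (Fin 2) K)] := by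
    intro n
    induction n with
    | zero =>
      funext i
      fin_cases i <;> simp
    | succ n ih =>
      rw [Function.iterate_succ_apply', ih]
      funext i
      fin_cases i
      · show MvPolynomial.bind₁ _ (MvPolynomial.X 0 +
            MvPolynomial.X 1 ^ (p - 1) * Polynomial.aeval (MvPolynomial.X 1 ^ p) P) = _
        rw [map_add, map_mul, map_pow, MvPolynomial.bind₁_X_right,
          MvPolynomial.bind₁_X_right, ← Polynomial.aeval_algHom_apply, map_pow,
          MvPolynomial.bind₁_X_right]
        simp only [Fin.zero_eta, Fin.mk_one, Fin.isValue, Matrix.cons_val_zero, Matrix.cons_val_one, Matrix.head_cons]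
        rw [Finset.sum_range_succ, ← add_assoc]
      · show MvPolynomial.bind₁ _ (MvPolynomial.X 1 + 1) = _
        rw [map_add, MvPolynomial.bind₁_X_right, map_one]
        simp only [Fin.zero_eta, Fin.mk_one, Fin.isValue, Matrix.cons_val_one, Matrix.head_cons]
        push_cast
        ring
  rw [hiter p]
  have hpz : ((p : ℕ) : MvPolynomial (Fin 2) K) = 0 := CharP.cast_eq_zero _ p
  constructor
  · intro h
    have h0 := congrFun h 0
    simp only [Matrix.cons_val_zero, add_eq_left] at h0
    have h1 : (MvPolynomial.aeval ![(0 : Polynomial K), Polynomial.X] :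
        MvPolynomial (Fin 2) K →ₐ[K] Polynomial K)
        (∑ k ∈ Finset.range p,
          (MvPolynomial.X 1 + (k : MvPolynomial (Fin 2) K)) ^ (p - 1)
            * Polynomial.aeval ((MvPolynomial.X 1 + (k : MvPolynomial (Fin 2) K)) ^ p) P)
        = 0 := by
      rw [h0, map_zero]
    rw [map_sum] at h1
    simp only [map_mul, map_pow, map_add, map_natCast, MvPolynomial.aeval_X,
      ← Polynomial.aeval_algHom_apply, Matrix.cons_val_one, Matrix.head_cons] at h1
    exact key P h1
  · intro h
    subst h
    funext i
    fin_cases i <;> simp [hpz]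
end

section
/- Let k be a field, and let f, g be polynomial automorphisms of A²_k of degree ≥ 2, regarded via their extensions as birational maps of P²_k. If the unique indeterminacy point I_g of g is different from the point X_f onto which f contracts the line at infinity, then deg(g∘f) = deg(g)·deg(f). -/
open MvPolynomial

/-- Composition of polynomial endomorphisms of affine `n`-space:
`(mvComp g f) i = g_i (f₁, …, f_n)`. -/
noncomputable def mvComp {k : Type*} [CommSemiring k] {n : ℕ}
    (g f : Fin n → MvPolynomial (Fin n) k) : Fin n → MvPolynomial (Fin n) k :=
  fun i => MvPolynomial.bind₁ f (g i)

/-- The degree of a polynomial endomorphism of affine `n`-space. -/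
noncomputable def mvDeg {k : Type*} [CommSemiring k] {n : ℕ}
    (f : Fin n → MvPolynomial (Fin n) k) : ℕ :=
  Finset.univ.sup fun i => (f i).totalDegree

/-- The highest homogeneous part of a polynomial endomorphism. -/
noncomputable def topPart {k : Type*} [CommSemiring k] {n : ℕ}
    (f : Fin n → MvPolynomial (Fin n) k) : Fin n → MvPolynomial (Fin n) k :=
  fun i => MvPolynomial.homogeneousComponent (mvDeg f) (f i)


section Scaling
variable {σ : Type*} [Fintype σ] {k S : Type*} [CommSemiring k] [CommSemiring S]

lemma degree_eq_sum_univ (m : σ →₀ ℕ) : m.degree = ∑ i, m i := by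
  rw [Finsupp.degree]
  exact Finset.sum_subset (Finset.subset_univ _) (fun i _ hi => Finsupp.notMem_support_iff.mp hi)

lemma eval₂_smul_of_isHomogeneous (φ : k →+* S) {G : MvPolynomial σ k} {n : ℕ}
    (h : G.IsHomogeneous n) (r : S) (x : σ → S) :
    eval₂ φ (r • x) G = r ^ n * eval₂ φ x G := by
  rw [eval₂_eq', eval₂_eq', Finset.mul_sum]
  apply Finset.sum_congr rfl
  intro m hm
  have hdeg : ∑ i, m i = n := by
    rw [← degree_eq_sum_univ, Finsupp.degree_eq_weight_one]
    exact h (MvPolynomial.mem_support_iff.mp hm)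
  have : ∏ i, (r • x) i ^ m i = r ^ n * ∏ i, x i ^ m i := by
    calc ∏ i, (r • x) i ^ m i = ∏ i, (r ^ m i * x i ^ m i) := by
          simp [mul_pow]
      _ = (∏ i, r ^ m i) * ∏ i, x i ^ m i := Finset.prod_mul_distrib
      _ = r ^ n * ∏ i, x i ^ m i := by rw [Finset.prod_pow_eq_pow_sum, hdeg]
  rw [this]; ring

lemma aeval_smul_of_isHomogeneous [Algebra k S] {G : MvPolynomial σ k} {n : ℕ}
    (h : G.IsHomogeneous n) (r : S) (x : σ → S) :
    aeval (r • x) G = r ^ n * aeval x G := by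
  rw [aeval_def, aeval_def, eval₂_smul_of_isHomogeneous _ h]

lemma eval_smul_of_isHomogeneous {G : MvPolynomial σ k} {n : ℕ}
    (h : G.IsHomogeneous n) (r : k) (x : σ → k) :
    eval (r • x) G = r ^ n * eval x G := by
  rw [eval, eval, coe_eval₂Hom, coe_eval₂Hom, eval₂_smul_of_isHomogeneous _ h]

omit [Fintype σ] in
lemma aeval_self_eq_eval (x : σ → k) (p : MvPolynomial σ k) : aeval x p = eval x p := by
  rw [aeval_def, eval]; simp [coe_eval₂Hom]
end Scaling


section Approx
variable {k : Type*} [CommRing k] {σ : Type*}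

/-- `p` has highest homogeneous part `P` in degree `n`. -/
def Approx (n : ℕ) (P p : MvPolynomial σ k) : Prop :=
  P.IsHomogeneous n ∧ (p - P = 0 ∨ (p - P).totalDegree < n)

lemma Approx.deg_le {n : ℕ} {P p : MvPolynomial σ k} (h : Approx n P p) : p.totalDegree ≤ n := by
  have hP : P.totalDegree ≤ n := h.1.totalDegree_le
  have hrw : p = P + (p - P) := by ring
  rcases h.2 with h2 | h2
  · rw [hrw, h2, add_zero]; exact hP
  · calc p.totalDegree ≤ max P.totalDegree (p - P).totalDegree := by
          conv_lhs => rw [hrw]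
          exact MvPolynomial.totalDegree_add _ _
      _ ≤ n := max_le hP h2.le

lemma small_add_mv {N : ℕ} {s t : MvPolynomial σ k}
    (hs : s = 0 ∨ s.totalDegree < N) (ht : t = 0 ∨ t.totalDegree < N) :
    s + t = 0 ∨ (s + t).totalDegree < N := by
  rcases hs with rfl | hs
  · rw [zero_add]; exact ht
  rcases ht with rfl | ht
  · rw [add_zero]; right; exact hs
  · right; exact lt_of_le_of_lt (MvPolynomial.totalDegree_add s t) (max_lt hs ht)

lemma Approx.mul {m n : ℕ} {P p Q q : MvPolynomial σ k}
    (hp : Approx m P p) (hq : Approx n Q q) : Approx (m + n) (P * Q) (p * q) := by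
  refine ⟨hp.1.mul hq.1, ?_⟩
  have key : p * q - P * Q = (p - P) * q + P * (q - Q) := by ring
  rw [key]
  apply small_add_mv
  · rcases hp.2 with h | h
    · left; rw [h, zero_mul]
    · right
      calc ((p - P) * q).totalDegree ≤ (p - P).totalDegree + q.totalDegree :=
            MvPolynomial.totalDegree_mul _ _
        _ < m + n := by have := hq.deg_le; omega
  · rcases hq.2 with h | h
    · left; rw [h, mul_zero]
    · right
      calc (P * (q - Q)).totalDegree ≤ P.totalDegree + (q - Q).totalDegree :=
            MvPolynomial.totalDegree_mul _ _
        _ < m + n := by have := hp.1.totalDegree_le; omega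

lemma Approx.one : Approx (σ := σ) (k := k) 0 1 1 :=
  ⟨MvPolynomial.isHomogeneous_one _ _, Or.inl (sub_self 1)⟩

lemma Approx.zero {n : ℕ} : Approx (σ := σ) (k := k) n 0 0 :=
  ⟨MvPolynomial.isHomogeneous_zero _ _ _, Or.inl (sub_self 0)⟩

lemma Approx.add {n : ℕ} {P p Q q : MvPolynomial σ k}
    (hp : Approx n P p) (hq : Approx n Q q) : Approx n (P + Q) (p + q) := by
  refine ⟨hp.1.add hq.1, ?_⟩
  have key : p + q - (P + Q) = (p - P) + (q - Q) := by ring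
  rw [key]; exact small_add_mv hp.2 hq.2

lemma Approx.pow {n : ℕ} {P p : MvPolynomial σ k} (h : Approx n P p) (a : ℕ) :
    Approx (n * a) (P ^ a) (p ^ a) := by
  induction a with
  | zero => simpa using Approx.one
  | succ a ih =>
      rw [pow_succ, pow_succ, Nat.mul_succ]
      exact ih.mul h

lemma Approx.sum {ι : Type*} {n : ℕ} (s : Finset ι) (P p : ι → MvPolynomial σ k)
    (h : ∀ i ∈ s, Approx n (P i) (p i)) :
    Approx n (∑ i ∈ s, P i) (∑ i ∈ s, p i) := by
  induction s using Finset.cons_induction with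
  | empty => simpa using Approx.zero
  | cons i s his ih =>
      rw [Finset.sum_cons, Finset.sum_cons]
      exact (h i (Finset.mem_cons_self _ _)).add (ih fun j hj => h j (Finset.mem_cons_of_mem hj))

lemma Approx.prod {ι : Type*} (s : Finset ι) (P p : ι → MvPolynomial σ k) (n : ι → ℕ)
    (h : ∀ i ∈ s, Approx (n i) (P i) (p i)) :
    Approx (∑ i ∈ s, n i) (∏ i ∈ s, P i) (∏ i ∈ s, p i) := by
  induction s using Finset.cons_induction with
  | empty => simpa using Approx.one
  | cons i s his ih =>
      rw [Finset.sum_cons, Finset.prod_cons, Finset.prod_cons]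
      exact (h i (Finset.mem_cons_self _ _)).mul (ih fun j hj => h j (Finset.mem_cons_of_mem hj))

lemma Approx.C_mul {n : ℕ} {P p : MvPolynomial σ k} (c : k) (h : Approx n P p) :
    Approx n (C c * P) (C c * p) := by
  refine ⟨h.1.C_mul c, ?_⟩
  have key : C c * p - C c * P = C c * (p - P) := by ring
  rw [key]
  rcases h.2 with h2 | h2
  · left; rw [h2, mul_zero]
  · right
    calc (C c * (p - P)).totalDegree ≤ (C c).totalDegree + (p - P).totalDegree :=
          MvPolynomial.totalDegree_mul _ _
      _ < n := by rw [MvPolynomial.totalDegree_C]; omega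

lemma approx_top {p : MvPolynomial σ k} {n : ℕ} (hn : 0 < n) (h : p.totalDegree ≤ n) :
    Approx n (homogeneousComponent n p) p := by
  refine ⟨homogeneousComponent_isHomogeneous n p, Or.inr ?_⟩
  rw [MvPolynomial.totalDegree]
  apply Finset.sup_lt_iff (by simpa using hn) |>.mpr
  intro m hm
  rw [MvPolynomial.mem_support_iff, MvPolynomial.coeff_sub, coeff_homogeneousComponent] at hm
  by_cases hd : m.degree = n
  · simp [hd] at hm
  · rw [if_neg hd, sub_zero] at hm
    have : m.degree ≤ p.totalDegree := MvPolynomial.le_totalDegree (MvPolynomial.mem_support_iff.mpr hm)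
    have hlt : m.degree < n := lt_of_le_of_ne (this.trans h) hd
    simpa [Finsupp.degree_apply, Finsupp.sum] using hlt
end Approx


section Bind
variable {k : Type*} [CommRing k] {σ τ : Type*}

lemma totalDegree_bind₁_le (f : τ → MvPolynomial σ k) (d : ℕ)
    (hf : ∀ j, (f j).totalDegree ≤ d) (p : MvPolynomial τ k) :
    (bind₁ f p).totalDegree ≤ p.totalDegree * d := by
  conv_lhs => rw [← support_sum_monomial_coeff p]
  rw [map_sum]
  refine (MvPolynomial.totalDegree_finset_sum _ _).trans (Finset.sup_le fun m hm => ?_)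
  rw [bind₁_monomial]
  calc (C (coeff m p) * ∏ i ∈ m.support, f i ^ m i).totalDegree
      ≤ (C (coeff m p) : MvPolynomial σ k).totalDegree + (∏ i ∈ m.support, f i ^ m i).totalDegree :=
        MvPolynomial.totalDegree_mul _ _
    _ ≤ 0 + ∑ i ∈ m.support, (f i ^ m i).totalDegree := by
        gcongr
        · exact le_of_eq (MvPolynomial.totalDegree_C _)
        · exact MvPolynomial.totalDegree_finset_prod _ _
    _ ≤ ∑ i ∈ m.support, m i * d := by
        rw [zero_add]
        refine Finset.sum_le_sum fun i _ => ?_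
        exact (MvPolynomial.totalDegree_pow _ _).trans (Nat.mul_le_mul_left _ (hf i))
    _ = (∑ i ∈ m.support, m i) * d := (Finset.sum_mul _ _ _).symm
    _ ≤ p.totalDegree * d := by
        have : (∑ i ∈ m.support, m i) ≤ p.totalDegree := by
          simpa [Finsupp.sum] using MvPolynomial.le_totalDegree hm
        exact Nat.mul_le_mul_right _ this

lemma approx_bind₁ {F f : τ → MvPolynomial σ k} {d : ℕ}
    (hFf : ∀ j, Approx d (F j) (f j)) {H : MvPolynomial τ k} {e : ℕ}
    (hH : H.IsHomogeneous e) : Approx (e * d) (bind₁ F H) (bind₁ f H) := by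
  conv in bind₁ F H => rw [← support_sum_monomial_coeff H]
  conv in bind₁ f H => rw [← support_sum_monomial_coeff H]
  rw [map_sum, map_sum]
  refine Approx.sum _ _ _ fun m hm => ?_
  rw [bind₁_monomial, bind₁_monomial]
  have hdeg : (∑ i ∈ m.support, m i) = e := by
    have h' : m.degree = e := by
      rw [Finsupp.degree_eq_weight_one]; exact hH (MvPolynomial.mem_support_iff.mp hm)
    simpa [Finsupp.degree_apply] using h'
  have hprod : Approx (∑ i ∈ m.support, d * m i)
      (∏ i ∈ m.support, F i ^ m i) (∏ i ∈ m.support, f i ^ m i) :=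
    Approx.prod _ _ _ _ fun i _ => (hFf i).pow (m i)
  have hsum : (∑ i ∈ m.support, d * m i) = e * d := by
    rw [← Finset.mul_sum, hdeg, Nat.mul_comm]
  rw [hsum] at hprod
  exact hprod.C_mul _

lemma Approx.component {n : ℕ} {P p : MvPolynomial σ k} (h : Approx n P p) :
    homogeneousComponent n p = P := by
  have hrw : p = P + (p - P) := by ring
  rw [hrw, map_add]
  have h1 : homogeneousComponent n P = P := by
    rw [homogeneousComponent_of_mem ((mem_homogeneousSubmodule n P).mpr h.1), if_pos rfl]
  have h2 : homogeneousComponent n (p - P) = 0 := by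
    rcases h.2 with h2 | h2
    · rw [h2]; simp
    · exact homogeneousComponent_eq_zero _ _ h2
  rw [h1, h2, add_zero]

lemma component_bind₁ {F f : τ → MvPolynomial σ k} {d e : ℕ} (hd : 0 < d)
    (hFf : ∀ j, Approx d (F j) (f j)) {p : MvPolynomial τ k} (hp : p.totalDegree ≤ e) :
    homogeneousComponent (e * d) (bind₁ f p) = bind₁ F (homogeneousComponent e p) := by
  have hsum : ∑ m ∈ Finset.range (e + 1), homogeneousComponent m p = p := by
    conv_rhs => rw [← sum_homogeneousComponent p]
    refine (Finset.sum_subset (Finset.range_subset_range.mpr (by omega)) fun m _ hm => ?_).symm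
    refine homogeneousComponent_eq_zero _ _ ?_
    simp only [Finset.mem_range, not_lt] at hm
    omega
  conv_lhs => rw [← hsum]
  rw [map_sum, map_sum]
  rw [Finset.sum_eq_single e]
  · exact (approx_bind₁ hFf (homogeneousComponent_isHomogeneous e p)).component
  · intro m hmr hme
    have hm : m < e := by simp only [Finset.mem_range] at hmr; omega
    apply homogeneousComponent_eq_zero
    calc (bind₁ f (homogeneousComponent m p)).totalDegree
        ≤ (homogeneousComponent m p).totalDegree * d :=
          totalDegree_bind₁_le f d (fun j => (hFf j).deg_le) _
      _ ≤ m * d := Nat.mul_le_mul_right _ (homogeneousComponent_isHomogeneous m p).totalDegree_le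
      _ < e * d := by
          have := Nat.mul_lt_mul_of_lt_of_le hm (le_refl d) hd
          omega
  · intro h; exact absurd (Finset.self_mem_range_succ e) h

lemma top_component_ne_zero {p : MvPolynomial σ k} (h : 0 < p.totalDegree) :
    homogeneousComponent p.totalDegree p ≠ 0 := by
  intro h0
  have hsum := sum_homogeneousComponent p
  rw [Finset.sum_range_succ, h0, add_zero] at hsum
  have : p.totalDegree ≤ p.totalDegree - 1 := by
    conv_lhs => rw [← hsum]
    refine (MvPolynomial.totalDegree_finset_sum _ _).trans (Finset.sup_le fun i hi => ?_)
    refine (homogeneousComponent_isHomogeneous i p).totalDegree_le.trans ?_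
    simp only [Finset.mem_range] at hi
    omega
  omega
end Bind

section Key
variable {k : Type*} [Field k] [IsAlgClosed k]

/-- Dehomogenization: substituting `1` for variable `b` and `X` for the other. -/
noncomputable def dehom (b : Fin 2) (G : MvPolynomial (Fin 2) k) : Polynomial k :=
  MvPolynomial.aeval (fun i => if i = b then (1 : Polynomial k) else Polynomial.X) G

omit [IsAlgClosed k] in
lemma dehom_eval (b : Fin 2) {S : Type*} [CommSemiring S] [Algebra k S] (t : S)
    (G : MvPolynomial (Fin 2) k) :
    Polynomial.aeval t (dehom b G) = MvPolynomial.aeval (fun i => if i = b then (1 : S) else t) G := by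
  rw [dehom, MvPolynomial.comp_aeval_apply]
  have : (fun i => Polynomial.aeval t (if i = b then (1 : Polynomial k) else Polynomial.X)) =
      (fun i => if i = b then (1 : S) else t) := by
    funext i; by_cases h : i = b <;> simp [h]
  rw [this]

lemma exists_eval_ne_zero {q : MvPolynomial (Fin 2) k} (hq : q ≠ 0) :
    ∃ w : Fin 2 → k, eval w q ≠ 0 := by
  by_contra h
  push_neg at h
  exact hq (MvPolynomial.funext fun x => by rw [h x, map_zero])

lemma dehom_ne_zero {a b : Fin 2} (hab : a ≠ b) (hcover : ∀ i : Fin 2, i = a ∨ i = b)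
    {G : MvPolynomial (Fin 2) k} {e : ℕ} (hG : G.IsHomogeneous e) (hne : G ≠ 0) :
    dehom b G ≠ 0 := by
  intro hP
  apply hne
  have hXb : G * X b = 0 := by
    apply MvPolynomial.funext
    intro w
    rw [map_mul, eval_X, map_zero]
    by_cases hwb : w b = 0
    · rw [hwb, mul_zero]
    · set vv : Fin 2 → k := (w b)⁻¹ • w with hvv
      have hw : w = (w b) • vv := by
        rw [hvv, smul_smul, mul_inv_cancel₀ hwb, one_smul]
      have hvvb : vv = fun i => if i = b then (1 : k) else vv a := by
        funext i
        rcases hcover i with rfl | rfl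
        · rw [if_neg hab]
        · rw [if_pos rfl, hvv]; simp [mul_inv_cancel₀ hwb, inv_mul_cancel₀ hwb]
      have hvval : eval vv G = 0 := by
        have := dehom_eval b (vv a) G
        rw [hP, map_zero] at this
        rw [← aeval_self_eq_eval, hvvb]
        exact this.symm
      rw [hw, eval_smul_of_isHomogeneous hG, hvval, mul_zero, zero_mul]
  rcases mul_eq_zero.mp hXb with h | h
  · exact h
  · exact absurd h (MvPolynomial.X_ne_zero b)

lemma key_aux {F G : Fin 2 → MvPolynomial (Fin 2) k} {e : ℕ} {a b : Fin 2}
    (hab : a ≠ b) (hcover : ∀ i : Fin 2, i = a ∨ i = b) (hFb : F b ≠ 0)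
    (hG : ∀ i, (G i).IsHomogeneous e) (hGne : ∃ i, G i ≠ 0)
    (h0 : ∀ i, bind₁ F (G i) = 0) :
    ∃ (u : Fin 2 → k) (q : MvPolynomial (Fin 2) k), u ≠ 0 ∧ q ≠ 0 ∧
      (∀ i, eval u (G i) = 0) ∧ ∀ j, F j = C (u j) * q := by
  set K := FractionRing (MvPolynomial (Fin 2) k)
  set φ : MvPolynomial (Fin 2) k →ₐ[k] K :=
    IsScalarTower.toAlgHom k (MvPolynomial (Fin 2) k) K with hφ
  have hφinj : Function.Injective φ := IsFractionRing.injective (MvPolynomial (Fin 2) k) K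
  have hv : φ (F b) ≠ 0 := fun h => hFb (by
    apply hφinj; rw [h, map_zero])
  set t : K := φ (F a) / φ (F b) with ht
  set vecK : Fin 2 → K := fun i => if i = b then 1 else t with hvecK
  have hsmul : (fun i => φ (F i)) = (φ (F b)) • vecK := by
    funext i
    rcases hcover i with rfl | rfl
    · simp only [hvecK, Pi.smul_apply, if_neg hab, smul_eq_mul, ht]
      rw [mul_div_cancel₀ _ hv]
    · simp [hvecK]
  have h1 : ∀ i, MvPolynomial.aeval vecK (G i) = 0 := by
    intro i
    have h2 : MvPolynomial.aeval (fun j => φ (F j)) (G i) = 0 := by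
      rw [← MvPolynomial.comp_aeval_apply]
      have hz : MvPolynomial.aeval F (G i) = 0 := h0 i
      rw [hz, map_zero]
    rw [hsmul, aeval_smul_of_isHomogeneous (hG i)] at h2
    exact (mul_eq_zero.mp h2).resolve_left (pow_ne_zero _ hv)
  obtain ⟨i₀, hi₀⟩ := hGne
  set P := dehom b (G i₀) with hPd
  have hPne : P ≠ 0 := dehom_ne_zero hab hcover (hG i₀) hi₀
  have hroot : Polynomial.aeval t P = 0 := by
    rw [hPd, dehom_eval]; exact h1 i₀
  -- t is in the image of k
  have hsplit : P.Splits := IsAlgClosed.splits P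
  have hmapne : P.map (algebraMap k K) ≠ 0 := by
    rw [Ne, Polynomial.map_eq_zero_iff (algebraMap k K).injective]
    exact hPne
  have hmem : t ∈ (P.map (algebraMap k K)).roots := by
    rw [Polynomial.mem_roots hmapne]
    rw [Polynomial.IsRoot, Polynomial.eval_map, ← Polynomial.aeval_def]
    exact hroot
  rw [Polynomial.Splits.roots_map hsplit] at hmem
  obtain ⟨c, _, hct⟩ := Multiset.mem_map.mp hmem
  refine ⟨fun i => if i = b then 1 else c, F b, ?_, hFb, ?_, ?_⟩
  · intro h
    have := congrFun h b
    simp at this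
  · intro i
    show eval (fun i => if i = b then (1:k) else c) (G i) = 0
    apply (algebraMap k K).injective
    rw [map_zero]
    have hbridge := MvPolynomial.comp_aeval_apply
      (fun i => if i = b then (1:k) else c) (Algebra.ofId k K) (G i)
    rw [Algebra.ofId_apply, aeval_self_eq_eval] at hbridge
    rw [hbridge]
    have hvec : (fun j => (Algebra.ofId k K) (if j = b then (1:k) else c)) = vecK := by
      funext j
      by_cases hj : j = b
      · simp [hj, hvecK, Algebra.ofId_apply]
      · simp only [hvecK, if_neg hj, Algebra.ofId_apply]
        exact hct
    rw [hvec]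
    exact h1 i
  · intro j
    show F j = C (if j = b then (1:k) else c) * F b
    rcases hcover j with rfl | rfl
    · rw [if_neg hab]
      apply hφinj
      rw [map_mul]
      have hφC : φ (C c : MvPolynomial (Fin 2) k) = algebraMap k K c := φ.commutes c
      rw [hφC, hct, ht, div_mul_cancel₀ _ hv]
    · rw [if_pos rfl, map_one, one_mul]
end Key


theorem stmt_8 (k : Type*) [Field k] [IsAlgClosed k]
    (f finv g ginv : Fin 2 → MvPolynomial (Fin 2) k)
    (hf1 : ∀ i, MvPolynomial.bind₁ f (finv i) = MvPolynomial.X i)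
    (hf2 : ∀ i, MvPolynomial.bind₁ finv (f i) = MvPolynomial.X i)
    (hg1 : ∀ i, MvPolynomial.bind₁ g (ginv i) = MvPolynomial.X i)
    (hg2 : ∀ i, MvPolynomial.bind₁ ginv (g i) = MvPolynomial.X i)
    (hdf : 2 ≤ mvDeg f) (hdg : 2 ≤ mvDeg g)
    -- `I_g ≠ X_f` : no representative of the contraction point of `f`
    -- is proportional to a representative of the indeterminacy point of `g`.
    (hsep : ∀ u w : Fin 2 → k, u ≠ 0 →
      (∀ i, MvPolynomial.eval u (topPart g i) = 0) →
      (∃ i, MvPolynomial.eval w (topPart f i) ≠ 0) →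
      ∀ c : k, (fun i => MvPolynomial.eval w (topPart f i)) ≠ c • u) :
    mvDeg (mvComp g f) = mvDeg g * mvDeg f := by

  classical
  set d := mvDeg f with hd
  set e := mvDeg g with he
  have hd1 : 0 < d := by omega
  have he1 : 0 < e := by omega
  have hfd : ∀ i, (f i).totalDegree ≤ d := by
    intro i; rw [hd]; unfold mvDeg; exact Finset.le_sup (f := fun i => (f i).totalDegree) (Finset.mem_univ i)
  have hge : ∀ i, (g i).totalDegree ≤ e := by
    intro i; rw [he]; unfold mvDeg; exact Finset.le_sup (f := fun i => (g i).totalDegree) (Finset.mem_univ i)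
  have hFapprox : ∀ j, Approx d (topPart f j) (f j) := fun j => approx_top hd1 (hfd j)
  have hupper : ∀ i, (bind₁ f (g i)).totalDegree ≤ e * d := by
    intro i
    calc (bind₁ f (g i)).totalDegree ≤ (g i).totalDegree * d := totalDegree_bind₁_le f d hfd _
      _ ≤ e * d := Nat.mul_le_mul_right _ (hge i)
  have hcomp : ∀ i, homogeneousComponent (e * d) (bind₁ f (g i))
      = bind₁ (topPart f) (topPart g i) := fun i => component_bind₁ hd1 hFapprox (hge i)
  have hGhom : ∀ i, (topPart g i).IsHomogeneous e :=
    fun i => homogeneousComponent_isHomogeneous _ _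
  have hne : ∃ i, bind₁ (topPart f) (topPart g i) ≠ 0 := by
    by_contra hcon
    push_neg at hcon
    have hGne : ∃ i, topPart g i ≠ 0 := by
      obtain ⟨i, -, hi⟩ := Finset.exists_mem_eq_sup Finset.univ Finset.univ_nonempty
        (fun i => (g i).totalDegree)
      have hi' : e = (g i).totalDegree := by rw [he]; unfold mvDeg; exact hi
      refine ⟨i, ?_⟩
      have : topPart g i = homogeneousComponent ((g i).totalDegree) (g i) := by
        unfold topPart; rw [← he, hi']
      rw [this]
      exact top_component_ne_zero (by omega)
    have hFne : ∃ j, topPart f j ≠ 0 := by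
      obtain ⟨j, -, hj⟩ := Finset.exists_mem_eq_sup Finset.univ Finset.univ_nonempty
        (fun i => (f i).totalDegree)
      have hj' : d = (f j).totalDegree := by rw [hd]; unfold mvDeg; exact hj
      refine ⟨j, ?_⟩
      have : topPart f j = homogeneousComponent ((f j).totalDegree) (f j) := by
        unfold topPart; rw [← hd, hj']
      rw [this]
      exact top_component_ne_zero (by omega)
    have hkey : ∃ (u : Fin 2 → k) (q : MvPolynomial (Fin 2) k), u ≠ 0 ∧ q ≠ 0 ∧
        (∀ i, eval u (topPart g i) = 0) ∧ ∀ j, topPart f j = C (u j) * q := by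
      obtain ⟨j, hj⟩ := hFne
      by_cases h1 : topPart f 1 = 0
      · have h0 : topPart f 0 ≠ 0 := by
          have hj01 : j = 0 ∨ j = 1 := by omega
          rcases hj01 with rfl | rfl
          · exact hj
          · exact absurd h1 hj
        exact key_aux (a := 1) (b := 0) (by decide) (by decide) h0 hGhom hGne hcon
      · exact key_aux (a := 0) (b := 1) (by decide) (by decide) h1 hGhom hGne hcon
    obtain ⟨u, q, hu, hq, hvan, hrel⟩ := hkey
    obtain ⟨w, hw⟩ := exists_eval_ne_zero hq
    set c := eval w q with hc
    have hx : ∀ i, eval w (topPart f i) = c * u i := by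
      intro i; rw [hrel i, map_mul, eval_C]; ring
    obtain ⟨j0, hj0⟩ := Function.ne_iff.mp hu
    have hj0' : u j0 ≠ 0 := by simpa using hj0
    refine hsep u w hu hvan ⟨j0, ?_⟩ c ?_
    · rw [hx]; exact mul_ne_zero hw hj0'
    · funext i
      rw [hx i]
      simp [smul_eq_mul]
  obtain ⟨i₀, hi₀⟩ := hne
  have hlow : e * d ≤ (bind₁ f (g i₀)).totalDegree := by
    by_contra hlt
    push_neg at hlt
    exact hi₀ (by rw [← hcomp i₀]; exact homogeneousComponent_eq_zero _ _ hlt)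
  have hmv : mvDeg (mvComp g f) = Finset.univ.sup fun i => (bind₁ f (g i)).totalDegree := rfl
  rw [hmv]
  apply le_antisymm
  · exact Finset.sup_le fun i _ => hupper i
  · exact le_trans hlow (Finset.le_sup (f := fun i => (MvPolynomial.bind₁ f (g i)).totalDegree) (Finset.mem_univ i₀))
end

section
/- Let k be an algebraically closed field and f a polynomial automorphism of A²_k of degree ≥ 2. If deg(f²) = deg(f)², then deg(f^m) = deg(f)^m for every m ≥ 1. -/
open MvPolynomial

section Aux

variable {k : Type*} [Field k]


lemma degree_fin2 (m : Fin 2 →₀ ℕ) : m.degree = m 0 + m 1 := by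
  rw [Finsupp.degree_apply]
  rw [Finset.sum_subset (Finset.subset_univ m.support)]
  · exact Fin.sum_univ_two m
  · intro i _ hi
    simpa using (Finsupp.notMem_support_iff.mp hi)

lemma degree_fin2_add (x y : Fin 2 →₀ ℕ) : (x + y).degree = x.degree + y.degree := by
  simp [degree_fin2, Finsupp.add_apply]; ring

lemma coeff_eq_zero_of_deg_lt {p : MvPolynomial (Fin 2) k} {m : Fin 2 →₀ ℕ} {a : ℕ}
    (hp : p.totalDegree ≤ a) (hm : a < m.degree) : coeff m p = 0 := by
  by_contra h
  have := le_totalDegree (p := p) (s := m) (by simpa [mem_support_iff] using h)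
  have hdeg : m.degree = m.sum fun _ e => e := rfl
  omega

lemma hC_mul {a b : ℕ} {p q : MvPolynomial (Fin 2) k}
    (hp : p.totalDegree ≤ a) (hq : q.totalDegree ≤ b) :
    homogeneousComponent (a + b) (p * q)
      = homogeneousComponent a p * homogeneousComponent b q := by
  ext m
  rw [coeff_homogeneousComponent, MvPolynomial.coeff_mul, MvPolynomial.coeff_mul]
  simp only [coeff_homogeneousComponent]
  split_ifs with h
  · refine Finset.sum_congr rfl ?_
    intro x hx
    have hxm : x.1 + x.2 = m := Finset.HasAntidiagonal.mem_antidiagonal.mp hx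
    have hsum : x.1.degree + x.2.degree = a + b := by
      rw [← degree_fin2_add, hxm, h]
    by_cases h1 : x.1.degree = a
    · have h2 : x.2.degree = b := by omega
      simp [h1, h2]
    · rcases lt_or_gt_of_ne h1 with hlt | hgt
      · have h2 : b < x.2.degree := by omega
        rw [coeff_eq_zero_of_deg_lt hq h2]
        simp [h1]
      · rw [coeff_eq_zero_of_deg_lt hp hgt]
        simp [h1]
  · symm
    refine Finset.sum_eq_zero ?_
    intro x hx
    have hxm : x.1 + x.2 = m := Finset.HasAntidiagonal.mem_antidiagonal.mp hx
    by_cases h1 : x.1.degree = a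
    · have h2 : x.2.degree ≠ b := by
        intro h2
        exact h (by rw [← hxm, degree_fin2_add, h1, h2])
      simp [h2]
    · simp [h1]

lemma hC_pow {a : ℕ} {p : MvPolynomial (Fin 2) k} (hp : p.totalDegree ≤ a) (n : ℕ) :
    homogeneousComponent (n * a) (p ^ n) = homogeneousComponent a p ^ n := by
  induction n with
  | zero => simp [homogeneousComponent_zero]
  | succ n ih =>
      have hpn : (p ^ n).totalDegree ≤ n * a :=
        (totalDegree_pow p n).trans (by exact Nat.mul_le_mul_left n hp)
      rw [pow_succ, pow_succ, Nat.succ_mul, hC_mul hpn hp, ih]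

lemma finsupp_prod_fin2 {A : Type*} [CommMonoid A] (m : Fin 2 →₀ ℕ) (g : Fin 2 → ℕ → A)
    (hg : ∀ i, g i 0 = 1) : m.prod g = g 0 (m 0) * g 1 (m 1) := by
  rw [Finsupp.prod_fintype _ _ hg, Fin.prod_univ_two]

lemma totalDegree_aeval_le (g : Fin 2 → MvPolynomial (Fin 2) k) (e : ℕ)
    (hg : ∀ i, (g i).totalDegree ≤ e) (p : MvPolynomial (Fin 2) k) :
    (aeval g p).totalDegree ≤ p.totalDegree * e := by
  conv_lhs => rw [p.as_sum, map_sum]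
  refine (totalDegree_finset_sum _ _).trans (Finset.sup_le ?_)
  intro m hm
  rw [aeval_monomial, finsupp_prod_fin2 _ _ (fun i => pow_zero (g i))]
  calc ((algebraMap k (MvPolynomial (Fin 2) k)) (coeff m p) * (g 0 ^ m 0 * g 1 ^ m 1)).totalDegree
      ≤ _ + _ := totalDegree_mul _ _
    _ ≤ 0 + (m 0 * e + m 1 * e) := by
        gcongr
        · exact le_of_eq (totalDegree_C _)
        · exact (totalDegree_mul _ _).trans (by
            gcongr <;>
              exact (totalDegree_pow _ _).trans (Nat.mul_le_mul_left _ (hg _)))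
    _ ≤ p.totalDegree * e := by
        have : (m.sum fun _ n => n) ≤ p.totalDegree := le_totalDegree hm
        have hd2 : m 0 + m 1 = m.sum fun _ n => n := (degree_fin2 m).symm
        nlinarith

lemma hC_totalDegree_ne_zero {p : MvPolynomial (Fin 2) k} (hp : p ≠ 0) :
    homogeneousComponent p.totalDegree p ≠ 0 := by
  obtain ⟨m, hm, hdeg⟩ := p.support.exists_mem_eq_sup
    (MvPolynomial.support_nonempty.mpr hp) fun s => s.sum fun _ e => e
  intro h
  have : coeff m (homogeneousComponent p.totalDegree p) = coeff m p := by
    rw [coeff_homogeneousComponent, if_pos]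
    exact (by rw [totalDegree, hdeg]; rfl)
  rw [h] at this
  exact (mem_support_iff.mp hm) (by simpa using this.symm)

lemma supp_degree_eq {a : ℕ} {P : MvPolynomial (Fin 2) k} (hP : P.IsHomogeneous a)
    {m : Fin 2 →₀ ℕ} (hm : m ∈ P.support) : m 0 + m 1 = a := by
  rw [← degree_fin2]
  by_contra h
  exact mem_support_iff.mp hm (hP.coeff_eq_zero h)

lemma hC_aeval_homog {a e : ℕ} {P : MvPolynomial (Fin 2) k} (hP : P.IsHomogeneous a)
    {g : Fin 2 → MvPolynomial (Fin 2) k} (hg : ∀ i, (g i).totalDegree ≤ e) :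
    homogeneousComponent (a * e) (aeval g P)
      = aeval (fun i => homogeneousComponent e (g i)) P := by
  conv_lhs => rw [P.as_sum, map_sum, map_sum]
  conv_rhs => rw [P.as_sum, map_sum]
  refine Finset.sum_congr rfl fun m hm => ?_
  rw [aeval_monomial, aeval_monomial,
    finsupp_prod_fin2 _ _ (fun i => pow_zero (g i)),
    finsupp_prod_fin2 _ _ (fun i => pow_zero _)]
  have hma : m 0 + m 1 = a := supp_degree_eq hP hm
  have halg : (algebraMap k (MvPolynomial (Fin 2) k)) (coeff m P) = C (coeff m P) := rfl
  rw [halg, homogeneousComponent_C_mul]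
  congr 1
  have h0 : (g 0 ^ m 0).totalDegree ≤ m 0 * e :=
    (totalDegree_pow _ _).trans (Nat.mul_le_mul_left _ (hg 0))
  have h1 : (g 1 ^ m 1).totalDegree ≤ m 1 * e :=
    (totalDegree_pow _ _).trans (Nat.mul_le_mul_left _ (hg 1))
  have hae : a * e = m 0 * e + m 1 * e := by rw [← hma]; ring
  rw [hae, hC_mul h0 h1, hC_pow (hg 0), hC_pow (hg 1)]

lemma hC_aeval {a e : ℕ} (he : 1 ≤ e) {p : MvPolynomial (Fin 2) k} (hp : p.totalDegree ≤ a)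
    {g : Fin 2 → MvPolynomial (Fin 2) k} (hg : ∀ i, (g i).totalDegree ≤ e) :
    homogeneousComponent (a * e) (aeval g p)
      = aeval (fun i => homogeneousComponent e (g i)) (homogeneousComponent a p) := by
  have hsum : ∑ n ∈ Finset.range (a + 1), homogeneousComponent n p = p := by
    have h1 : Finset.range (p.totalDegree + 1) ⊆ Finset.range (a + 1) :=
      Finset.range_subset_range.mpr (by omega)
    have h2 : ∀ n ∈ Finset.range (a + 1), n ∉ Finset.range (p.totalDegree + 1) →
        homogeneousComponent n p = 0 := fun n _ hn =>
      homogeneousComponent_eq_zero _ _ (by simp at hn ⊢; omega)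
    exact (Finset.sum_subset h1 h2).symm.trans (sum_homogeneousComponent p)
  have hav : aeval g p = ∑ n ∈ Finset.range (a + 1), aeval g (homogeneousComponent n p) := by
    rw [← map_sum, hsum]
  rw [hav, map_sum, Finset.sum_eq_single_of_mem a (Finset.self_mem_range_succ a)]
  · exact hC_aeval_homog (homogeneousComponent_isHomogeneous a p) hg
  · intro n hn hne
    have hn' : n ≤ a := by simpa using Nat.lt_succ_iff.mp (Finset.mem_range.mp hn)
    have hdeg : (aeval g (homogeneousComponent n p)).totalDegree < a * e := by
      have := totalDegree_aeval_le g e hg (homogeneousComponent n p)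
      have h2 : (homogeneousComponent n p).totalDegree ≤ n :=
        (homogeneousComponent_isHomogeneous n p).totalDegree_le
      have h3 : (aeval g (homogeneousComponent n p)).totalDegree ≤ n * e :=
        this.trans (Nat.mul_le_mul_right e h2)
      have hlt : n * e < a * e :=
        (Nat.mul_lt_mul_right (by omega : 0 < e)).mpr (lt_of_le_of_ne hn' hne)
      exact lt_of_le_of_lt h3 hlt
    exact homogeneousComponent_eq_zero _ _ hdeg

lemma aeval_scaled {A : Type*} [CommRing A] [Algebra k A] {n : ℕ} {P : MvPolynomial (Fin 2) k}
    (hP : P.IsHomogeneous n) (u : Fin 2 → A) (H : A) :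
    aeval (fun i => u i * H) P = aeval u P * H ^ n := by
  conv_lhs => rw [P.as_sum, map_sum]
  conv_rhs => rw [P.as_sum, map_sum, Finset.sum_mul]
  refine Finset.sum_congr rfl fun m hm => ?_
  rw [aeval_monomial, aeval_monomial,
    finsupp_prod_fin2 _ _ (fun i => pow_zero _),
    finsupp_prod_fin2 _ _ (fun i => pow_zero _)]
  have hma : m 0 + m 1 = n := supp_degree_eq hP hm
  rw [mul_pow, mul_pow, ← hma, pow_add]
  ring

lemma prop_of_aeval_eq_zero [IsAlgClosed k] {n : ℕ} {w : MvPolynomial (Fin 2) k}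
    (hw : w.IsHomogeneous n) (hw0 : w ≠ 0) {v : Fin 2 → MvPolynomial (Fin 2) k}
    (hv : aeval v w = 0) :
    ∃ s t : k, (s ≠ 0 ∨ t ≠ 0) ∧ C t * v 0 = C s * v 1 := by
  by_cases hv1 : v 1 = 0
  · exact ⟨1, 0, Or.inl one_ne_zero, by simp [hv1]⟩
  set K := FractionRing (MvPolynomial (Fin 2) k)
  let φ : MvPolynomial (Fin 2) k →ₐ[k] K := IsScalarTower.toAlgHom k _ K
  have hφinj : Function.Injective φ := by
    have := IsFractionRing.injective (MvPolynomial (Fin 2) k) K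
    simpa [φ, IsScalarTower.coe_toAlgHom'] using this
  set H : K := φ (v 1) with hHdef
  have hH : H ≠ 0 := fun h => hv1 (hφinj (by simpa [hHdef] using h))
  set ξ : K := φ (v 0) / H with hXdef
  have hscaled : aeval ![ξ, (1:K)] w * H ^ n = 0 := by
    rw [← aeval_scaled hw]
    have h1 : (fun i => ![ξ, (1:K)] i * H) = fun i => φ (v i) := by
      funext i
      fin_cases i
      · simp [hXdef, div_mul_cancel₀ _ hH]
      · simp [hHdef]
    rw [h1]
    have h2 : aeval (fun i => φ (v i)) w = φ (aeval v w) := by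
      rw [← comp_aeval, AlgHom.comp_apply]
    rw [h2, hv, map_zero]
  have haev : aeval ![ξ, (1:K)] w = 0 := by
    rcases mul_eq_zero.mp hscaled with h | h
    · exact h
    · exact absurd h (pow_ne_zero _ hH)
  -- the one-variable polynomial
  set W : Polynomial k := aeval ![Polynomial.X, (1 : Polynomial k)] w with hWdef
  have hWξ : Polynomial.aeval ξ W = 0 := by
    have := congrArg (fun q => Polynomial.aeval ξ q) hWdef.symm
    have hcomp : (Polynomial.aeval ξ).comp (aeval ![Polynomial.X, (1 : Polynomial k)])
        = aeval (R := k) (fun i => Polynomial.aeval ξ (![Polynomial.X, (1:Polynomial k)] i)) :=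
      comp_aeval _ _
    have : Polynomial.aeval ξ W
        = aeval (fun i => Polynomial.aeval ξ (![Polynomial.X, (1:Polynomial k)] i)) w := by
      rw [hWdef, ← AlgHom.comp_apply, hcomp]
    rw [this]
    have : (fun i => Polynomial.aeval ξ (![Polynomial.X, (1:Polynomial k)] i)) = ![ξ, (1:K)] := by
      funext i; fin_cases i <;> simp
    rw [this, haev]
  have hW0 : W ≠ 0 := by
    obtain ⟨m, hm⟩ := MvPolynomial.support_nonempty.mpr hw0
    have hWsum : W = ∑ m' ∈ w.support, Polynomial.C (coeff m' w) * Polynomial.X ^ (m' 0) := by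
      rw [hWdef]
      conv_lhs => rw [w.as_sum, map_sum]
      refine Finset.sum_congr rfl fun m' _ => ?_
      rw [aeval_monomial]
      rw [Finsupp.prod_fintype _ _ (fun i => pow_zero _), Fin.prod_univ_two]
      simp [Polynomial.algebraMap_eq]
    intro h
    have hc : W.coeff (m 0) = coeff m w := by
      rw [hWsum, Polynomial.finset_sum_coeff]
      refine (Finset.sum_eq_single_of_mem m hm ?_).trans
        (by simp [Polynomial.coeff_C_mul, Polynomial.coeff_X_pow])
      intro m' hm' hne
      · 
        rw [Polynomial.coeff_C_mul, Polynomial.coeff_X_pow]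
        suffices hs : ¬ m 0 = m' 0 by simp [hs]
        intro he'
        have he : m' 0 = m 0 := he'.symm
        apply hne
        have h1 := supp_degree_eq hw hm'
        have h2 := supp_degree_eq hw hm
        ext i
        fin_cases i
        · exact he
        · simpa using (by omega : m' 1 = m 1)
    rw [h] at hc
    simp only [Polynomial.coeff_zero] at hc
    exact mem_support_iff.mp hm hc.symm
  obtain ⟨r, hr⟩ : ∃ r : k, ξ = algebraMap k K r := by
    have hsplit : W.Splits := IsAlgClosed.splits W
    have heq := hsplit.eq_prod_roots
    have h0 := congrArg (Polynomial.aeval ξ) heq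
    rw [hWξ, map_mul, map_multiset_prod] at h0
    have hlc : Polynomial.aeval ξ (Polynomial.C W.leadingCoeff) ≠ 0 := by
      simpa using Polynomial.leadingCoeff_ne_zero.mpr hW0
    have hprod : ((W.roots.map fun a => Polynomial.X - Polynomial.C a).map
        (Polynomial.aeval ξ)).prod = 0 := by
      rcases mul_eq_zero.mp h0.symm with h | h
      · exact absurd h hlc
      · exact h
    have h0mem := Multiset.prod_eq_zero_iff.mp hprod
    obtain ⟨q, hq, hq0⟩ := Multiset.mem_map.mp h0mem
    obtain ⟨r, hrmem, hrq⟩ := Multiset.mem_map.mp hq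
    refine ⟨r, ?_⟩
    have : Polynomial.aeval ξ (Polynomial.X - Polynomial.C r) = 0 := by rw [hrq, hq0]
    rw [map_sub, Polynomial.aeval_X, Polynomial.aeval_C] at this
    exact sub_eq_zero.mp this
  refine ⟨r, 1, Or.inr one_ne_zero, ?_⟩
  apply hφinj
  rw [map_mul, map_mul]
  have h1 : φ (C (1:k)) = 1 := by simp
  have h2 : φ (C r) = algebraMap k K r := by
    rw [← MvPolynomial.algebraMap_eq]
    exact φ.commutes r
  rw [h1, one_mul, h2, ← hr, hXdef, div_mul_cancel₀ _ hH]

lemma aeval_C_comp {k : Type*} [Field k] (c : Fin 2 → k) (P : MvPolynomial (Fin 2) k) :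
    aeval (fun j => (C (c j) : MvPolynomial (Fin 2) k)) P = C (aeval c P) := by
  have h := AlgHom.congr_fun
    (comp_aeval (f := c) (Algebra.ofId k (MvPolynomial (Fin 2) k))) P
  simpa [Algebra.ofId_apply, MvPolynomial.algebraMap_eq] using h.symm

end Aux

theorem stmt_9 (k : Type*) [Field k] [IsAlgClosed k]
    (f finv : Fin 2 → MvPolynomial (Fin 2) k)
    (hf1 : ∀ i, MvPolynomial.bind₁ f (finv i) = MvPolynomial.X i)
    (hf2 : ∀ i, MvPolynomial.bind₁ finv (f i) = MvPolynomial.X i)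
    (hdf : 2 ≤ mvDeg f)
    (h2 : mvDeg (mvComp f f) = (mvDeg f) ^ 2) :
    ∀ m : ℕ, 1 ≤ m →
      mvDeg ((mvComp f)^[m] (fun i => MvPolynomial.X i)) = (mvDeg f) ^ m := by
  classical
  set d := mvDeg f with hd
  have hfd : ∀ i, (f i).totalDegree ≤ d := by
    intro i
    show (f i).totalDegree ≤ Finset.univ.sup fun j => (f j).totalDegree
    exact Finset.le_sup (f := fun j => (f j).totalDegree) (Finset.mem_univ i)
  set F : ℕ → (Fin 2 → MvPolynomial (Fin 2) k) :=
    fun m => (mvComp f)^[m] (fun i => X i) with hFdef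
  have hFs : ∀ m i, F (m + 1) i = aeval (F m) (f i) := by
    intro m i
    have h : F (m + 1) = mvComp f (F m) := Function.iterate_succ_apply' (mvComp f) m _
    rw [h]
    rfl
  have degF : ∀ m i, (F m i).totalDegree ≤ d ^ m := by
    intro m
    induction m with
    | zero =>
        intro i
        show (X i : MvPolynomial (Fin 2) k).totalDegree ≤ d ^ 0
        rw [totalDegree_X, pow_zero]
    | succ m ih =>
        intro i
        rw [hFs m i]
        refine (totalDegree_aeval_le (F m) (d ^ m) ih (f i)).trans ?_
        rw [pow_succ']
        exact Nat.mul_le_mul_right _ (hfd i)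
  set T : ℕ → Fin 2 → MvPolynomial (Fin 2) k :=
    fun m i => homogeneousComponent (d ^ m) (F m i) with hTdef
  set fh : Fin 2 → MvPolynomial (Fin 2) k :=
    fun i => homogeneousComponent d (f i) with hfhdef
  have hfhhom : ∀ i, (fh i).IsHomogeneous d :=
    fun i => homogeneousComponent_isHomogeneous d (f i)
  have topRec : ∀ m i, T (m + 1) i = aeval (T m) (fh i) := by
    intro m i
    have he : 1 ≤ d ^ m := Nat.one_le_pow _ _ (by omega)
    have h := hC_aeval (a := d) (e := d ^ m) he (hfd i) (fun j => degF m j)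
    show homogeneousComponent (d ^ (m + 1)) (F (m + 1) i) = _
    rw [hFs m i, show d ^ (m + 1) = d * d ^ m from by rw [pow_succ]; ring]
    exact h
  have hT0 : T 0 = fun i => X i := by
    funext i
    show homogeneousComponent (d ^ 0) (X i) = X i
    rw [pow_zero, homogeneousComponent_of_mem
      ((mem_homogeneousSubmodule 1 (X i)).mpr (isHomogeneous_X k i))]
    simp
  have hT1 : ∀ i, T 1 i = fh i := by
    intro i
    have h := topRec 0 i
    rw [hT0] at h
    exact h.trans (aeval_X_left_apply _)
  have hF1 : F 1 = f := by
    funext i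
    exact (hFs 0 i).trans (aeval_X_left_apply _)
  have hF2 : F 2 = mvComp f f := by
    funext i
    have h := hFs 1 i
    rw [hF1] at h
    exact h
  have key2 : ∃ i, T 2 i ≠ 0 := by
    have h2' : mvDeg (F 2) = d ^ 2 := by rw [hF2]; exact h2
    obtain ⟨i, _, hi⟩ := Finset.exists_mem_eq_sup Finset.univ
      ⟨0, Finset.mem_univ 0⟩ (fun i => (F 2 i).totalDegree)
    have hdeg : (F 2 i).totalDegree = d ^ 2 := by
      rw [← h2']
      exact hi.symm
    have hne : F 2 i ≠ 0 := by
      intro h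
      rw [h, totalDegree_zero] at hdeg
      nlinarith
    refine ⟨i, ?_⟩
    have h3 := hC_totalDegree_ne_zero hne
    rw [hdeg] at h3
    exact h3
  have hMain : ∀ m, 1 ≤ m → ∃ i, T m i ≠ 0 := by
    by_cases hA : ∃ s t : k, (s ≠ 0 ∨ t ≠ 0) ∧ C t * fh 0 = C s * fh 1
    · -- proportional case
      obtain ⟨s, t, hst, heq⟩ := hA
      set c : Fin 2 → k := ![s, t] with hcdef
      have hc0 : c 0 = s := rfl
      have hc1 : c 1 = t := rfl
      obtain ⟨H, hfh'⟩ : ∃ H : MvPolynomial (Fin 2) k, ∀ i, fh i = C (c i) * H := by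
        rcases hst with hs | ht
        · refine ⟨C s⁻¹ * fh 0, fun i => ?_⟩
          fin_cases i
          · show fh 0 = C (c 0) * (C s⁻¹ * fh 0)
            rw [hc0, ← mul_assoc, ← map_mul, mul_inv_cancel₀ hs, map_one, one_mul]
          · show fh 1 = C (c 1) * (C s⁻¹ * fh 0)
            rw [hc1]
            apply mul_left_cancel₀ (C_ne_zero.mpr hs)
            rw [← heq]
            ring_nf
            rw [mul_assoc, ← map_mul, mul_inv_cancel₀ hs, map_one, mul_one]
        · refine ⟨C t⁻¹ * fh 1, fun i => ?_⟩
          fin_cases i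
          · show fh 0 = C (c 0) * (C t⁻¹ * fh 1)
            rw [hc0]
            apply mul_left_cancel₀ (C_ne_zero.mpr ht)
            rw [heq]
            ring_nf
            rw [mul_assoc, ← map_mul, mul_inv_cancel₀ ht, map_one, mul_one]
          · show fh 1 = C (c 1) * (C t⁻¹ * fh 1)
            rw [hc1, ← mul_assoc, ← map_mul, mul_inv_cancel₀ ht, map_one, one_mul]
      have hHhom : H.IsHomogeneous d := by
        obtain ⟨i, hci⟩ : ∃ i, c i ≠ 0 := by
          rcases hst with h | h
          exacts [⟨0, by rwa [hc0]⟩, ⟨1, by rwa [hc1]⟩]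
        have hHeq : H = homogeneousComponent d (C (c i)⁻¹ * f i) := by
          rw [homogeneousComponent_C_mul]
          show H = C (c i)⁻¹ * fh i
          rw [hfh' i, ← mul_assoc, ← map_mul, inv_mul_cancel₀ hci, map_one, one_mul]
        rw [hHeq]
        exact homogeneousComponent_isHomogeneous _ _
      -- compute T 2
      have hT2 : ∀ i, T 2 i = C (c i * aeval c H) * H ^ d := by
        intro i
        have h := topRec 1 i
        have hTfun : T 1 = fun j => C (c j) * H := by
          funext j
          rw [hT1 j, hfh' j]
        rw [hTfun, aeval_scaled (hfhhom i) (fun j => C (c j)) H,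
          aeval_C_comp, hfh' i, map_mul, aeval_C] at h
        simp only [Algebra.algebraMap_self, RingHom.id_apply] at h
        exact h
      obtain ⟨i2, hi2⟩ := key2
      have hγ : aeval c H ≠ 0 := by
        intro h
        apply hi2
        rw [hT2 i2, h, mul_zero, map_zero, zero_mul]
      have hHne : H ≠ 0 := by
        intro h
        apply hi2
        rw [hT2 i2, h, zero_pow (by omega : d ≠ 0), mul_zero]
      have hstep : ∀ m, 1 ≤ m →
          ∃ (u : k) (e : ℕ), u ≠ 0 ∧ ∀ i, T m i = C (c i * u) * H ^ e := by
        intro m hm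
        induction m, hm using Nat.le_induction with
        | base =>
            exact ⟨1, 1, one_ne_zero, fun i => by rw [hT1 i, hfh' i]; simp⟩
        | succ m hm ih =>
            obtain ⟨u, e, hu, hTe⟩ := ih
            refine ⟨u ^ d * aeval c H, e * d,
              mul_ne_zero (pow_ne_zero _ hu) hγ, fun i => ?_⟩
            rw [topRec m i]
            have hTfun : T m = fun j => C (c j * u) * H ^ e := funext hTe
            rw [hTfun, aeval_scaled (hfhhom i) (fun j => C (c j * u)) (H ^ e),
              aeval_C_comp, hfh' i, map_mul, aeval_C]
            have hscale : aeval (fun j => c j * u) H = aeval c H * u ^ d := by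
              have h := aeval_scaled (A := k) hHhom c u
              simpa using h
            simp only [Algebra.algebraMap_self, RingHom.id_apply]
            rw [hscale, ← pow_mul]
            ring
      intro m hm
      obtain ⟨u, e, hu, hTe⟩ := hstep m hm
      obtain ⟨i, hci⟩ : ∃ i, c i ≠ 0 := by
        rcases hst with h | h
        exacts [⟨0, by rwa [hc0]⟩, ⟨1, by rwa [hc1]⟩]
      refine ⟨i, ?_⟩
      rw [hTe i]
      exact mul_ne_zero (C_ne_zero.mpr (mul_ne_zero hci hu)) (pow_ne_zero _ hHne)
    · -- non-proportional case
      have nonprop : ∀ m, 1 ≤ m →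
          ¬ ∃ s t : k, (s ≠ 0 ∨ t ≠ 0) ∧ C t * T m 0 = C s * T m 1 := by
        intro m hm
        induction m, hm using Nat.le_induction with
        | base =>
            intro ⟨s, t, hst, heq⟩
            exact hA ⟨s, t, hst, by rwa [hT1 0, hT1 1] at heq⟩
        | succ m hm ih =>
            rintro ⟨s, t, hst, heq⟩
            set w : MvPolynomial (Fin 2) k := C t * fh 0 - C s * fh 1 with hwdef
            have hw0 : w ≠ 0 := by
              intro h
              exact hA ⟨s, t, hst, sub_eq_zero.mp h⟩
            have hwhom : w.IsHomogeneous d := by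
              have hw2 : w = homogeneousComponent d (C t * f 0 - C s * f 1) := by
                rw [map_sub, homogeneousComponent_C_mul, homogeneousComponent_C_mul]
              rw [hw2]
              exact homogeneousComponent_isHomogeneous _ _
            have haev : aeval (T m) w = 0 := by
              rw [hwdef, map_sub, map_mul, map_mul, aeval_C, aeval_C,
                ← topRec m 0, ← topRec m 1]
              rw [MvPolynomial.algebraMap_eq, heq]
              ring
            exact ih (prop_of_aeval_eq_zero hwhom hw0 haev)
      intro m hm
      refine ⟨0, fun h0 => nonprop m hm ⟨0, 1, Or.inr one_ne_zero, ?_⟩⟩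
      rw [h0]
      simp
  intro m hm
  obtain ⟨i, hi⟩ := hMain m hm
  refine le_antisymm (Finset.sup_le fun j _ => degF m j) ?_
  have hge : d ^ m ≤ (F m i).totalDegree := by
    by_contra hlt
    exact hi (homogeneousComponent_eq_zero _ _ (by omega))
  calc d ^ m ≤ (F m i).totalDegree := hge
    _ ≤ _ := Finset.le_sup (f := fun j => (F m j).totalDegree) (Finset.mem_univ i)
end

section
/- Let k be a field and f a polynomial automorphism of A^n_k of degree ≥ 2 such that X_f ∩ I_f = ∅, where I_f is the indeterminacy locus at infinity and X_f the image of the hyperplane at infinity minus I_f. Then deg(f^m) = deg(f)^m and X_{f^m} ⊆ X_f for every m ≥ 1. -/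
open MvPolynomial

/-! ### Auxiliary lemmas -/

/-- The "degree-grading" algebra map `X i ↦ (X i) • t` into polynomials over
multivariate polynomials; its `t`-coefficients are the homogeneous components. -/
noncomputable def Phi {k : Type*} [CommSemiring k] {n : ℕ} :
    MvPolynomial (Fin n) k →ₐ[k] Polynomial (MvPolynomial (Fin n) k) :=
  MvPolynomial.aeval (fun i => Polynomial.C (MvPolynomial.X i) * Polynomial.X)

lemma degree_eq_sum {n : ℕ} (a : Fin n →₀ ℕ) : a.degree = ∑ i, a i := by
  rw [show a.degree = a.sum (fun _ e => e) from rfl, Finsupp.sum_fintype _ _ (fun _ => rfl)]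

lemma homogeneousComponent_monomial' {k : Type*} [CommSemiring k] {n : ℕ}
    (D : ℕ) (a : Fin n →₀ ℕ) (c : k) :
    homogeneousComponent D (monomial a c) =
      if a.degree = D then monomial a c else 0 := by
  ext b
  rw [coeff_homogeneousComponent]
  by_cases hb : b = a
  · subst hb
    by_cases h : b.degree = D <;> simp [h]
  · by_cases h : b.degree = D <;> by_cases h2 : a.degree = D <;>
      simp [h, h2, coeff_monomial, hb, Ne.symm hb]

lemma coeff_Phi {k : Type*} [CommSemiring k] {n : ℕ} (p : MvPolynomial (Fin n) k) (D : ℕ) :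
    (Phi p).coeff D = MvPolynomial.homogeneousComponent D p := by
  induction p using MvPolynomial.induction_on' with
  | add p q hp hq => simp [map_add, hp, hq]
  | monomial a c =>
    rw [Phi, aeval_monomial]
    rw [Finsupp.prod_fintype _ _ (fun i => pow_zero _)]
    simp only [mul_pow, ← Polynomial.C_pow]
    rw [Finset.prod_mul_distrib, ← map_prod, Finset.prod_pow_eq_pow_sum]
    have halg : (algebraMap k (Polynomial (MvPolynomial (Fin n) k))) c
        = Polynomial.C (MvPolynomial.C c) := rfl
    have hmon : MvPolynomial.C c * ∏ x : Fin n, (X x : MvPolynomial (Fin n) k) ^ a x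
        = monomial a c := by
      rw [monomial_eq, Finsupp.prod_fintype _ _ (fun i => pow_zero _)]
    rw [halg, ← mul_assoc, ← Polynomial.C_mul, hmon,
      Polynomial.C_mul_X_pow_eq_monomial, Polynomial.coeff_monomial,
      homogeneousComponent_monomial', degree_eq_sum]

lemma natDegree_Phi_le {k : Type*} [CommSemiring k] {n : ℕ} (p : MvPolynomial (Fin n) k) :
    (Phi p).natDegree ≤ p.totalDegree := by
  rw [Polynomial.natDegree_le_iff_coeff_eq_zero]
  intro D hD
  rw [coeff_Phi]
  exact homogeneousComponent_eq_zero _ _ hD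

lemma coeff_prod_at_sum {R : Type*} [CommSemiring R] {ι : Type*} (s : Finset ι)
    (r : ι → Polynomial R) (b : ι → ℕ) (h : ∀ i ∈ s, (r i).natDegree ≤ b i) :
    (∏ i ∈ s, r i).coeff (∑ i ∈ s, b i) = ∏ i ∈ s, (r i).coeff (b i) := by
  induction s using Finset.cons_induction with
  | empty => simp
  | cons i s hi ih =>
    rw [Finset.prod_cons, Finset.sum_cons, Finset.prod_cons,
      Polynomial.coeff_mul_add_eq_of_natDegree_le (h i (Finset.mem_cons_self i s))
        ((Polynomial.natDegree_prod_le _ _).trans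
          (Finset.sum_le_sum fun j hj => h j (Finset.mem_cons_of_mem hj))),
      ih fun j hj => h j (Finset.mem_cons_of_mem hj)]

lemma le_mvDeg {k : Type*} [CommSemiring k] {n : ℕ}
    (g : Fin n → MvPolynomial (Fin n) k) (i : Fin n) :
    (g i).totalDegree ≤ mvDeg g :=
  Finset.le_sup (f := fun j => (g j).totalDegree) (Finset.mem_univ i)

lemma totalDegree_bind₁_le_s11 {k : Type*} [CommSemiring k] {n : ℕ}
    (g : Fin n → MvPolynomial (Fin n) k) (p : MvPolynomial (Fin n) k) :
    (bind₁ g p).totalDegree ≤ p.totalDegree * mvDeg g := by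
  conv_lhs => rw [p.as_sum]
  rw [map_sum]
  refine (totalDegree_finset_sum _ _).trans (Finset.sup_le fun a ha => ?_)
  rw [bind₁, aeval_monomial, Finsupp.prod_fintype _ _ (fun i => pow_zero _)]
  refine (totalDegree_mul _ _).trans ?_
  have h1 : (algebraMap k (MvPolynomial (Fin n) k) (coeff a p)).totalDegree = 0 :=
    totalDegree_C _
  rw [h1, zero_add]
  refine (totalDegree_finset_prod _ _).trans ?_
  have : ∀ i : Fin n, (g i ^ a i).totalDegree ≤ a i * mvDeg g := fun i =>
    (totalDegree_pow _ _).trans (Nat.mul_le_mul_left _ (le_mvDeg g i))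
  refine (Finset.sum_le_sum fun i _ => this i).trans ?_
  rw [← Finset.sum_mul]
  exact Nat.mul_le_mul_right _ (by
    have := le_totalDegree (p := p) ha
    rwa [show (a.sum fun _ e => e) = ∑ i, a i from
      Finsupp.sum_fintype _ _ (fun _ => rfl)] at this)

/-- Key lemma: the top homogeneous component of a composition is the composition of
the top parts. -/
lemma homComp_bind₁ {k : Type*} [CommSemiring k] {n : ℕ}
    (g : Fin n → MvPolynomial (Fin n) k) (p : MvPolynomial (Fin n) k)
    (d : ℕ) (hp : p.totalDegree ≤ d) (he : 1 ≤ mvDeg g) :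
    homogeneousComponent (d * mvDeg g) (bind₁ g p) =
      bind₁ (topPart g) (homogeneousComponent d p) := by
  have hPhi : Phi (bind₁ g p) = MvPolynomial.aeval (fun i => Phi (g i)) p := by
    rw [bind₁]
    exact comp_aeval_apply _ _ _
  rw [← coeff_Phi, hPhi]
  conv_lhs => rw [p.as_sum]
  conv_rhs => rw [p.as_sum]
  rw [map_sum, map_sum, map_sum, Polynomial.finset_sum_coeff]
  refine Finset.sum_congr rfl fun a ha => ?_
  have hale : a.degree ≤ d := by
    refine le_trans ?_ hp
    rw [degree_eq_sum]
    have := le_totalDegree (p := p) ha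
    rwa [show (a.sum fun _ e => e) = ∑ i, a i from
      Finsupp.sum_fintype _ _ (fun _ => rfl)] at this
  rw [aeval_monomial, Finsupp.prod_fintype _ _ (fun i => pow_zero _),
    homogeneousComponent_monomial']
  by_cases hdeg : a.degree = d
  · rw [if_pos hdeg]
    have halg : (algebraMap k (Polynomial (MvPolynomial (Fin n) k))) (coeff a p)
        = Polynomial.C (MvPolynomial.C (coeff a p)) := rfl
    rw [halg, Polynomial.coeff_C_mul]
    have hsum : d * mvDeg g = ∑ i : Fin n, a i * mvDeg g := by
      rw [← Finset.sum_mul, ← degree_eq_sum, hdeg]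
    rw [hsum, coeff_prod_at_sum _ _ _ (fun i _ =>
      (Polynomial.natDegree_pow_le).trans
        (Nat.mul_le_mul_left _ ((natDegree_Phi_le _).trans
          (le_mvDeg g i))))]
    have hc : ∀ i : Fin n, ((Phi (g i)) ^ a i).coeff (a i * mvDeg g)
        = (topPart g i) ^ a i := by
      intro i
      rw [Polynomial.coeff_pow_of_natDegree_le
        ((natDegree_Phi_le _).trans (le_mvDeg g i)), coeff_Phi]
      rfl
    rw [Finset.prod_congr rfl (fun i _ => hc i)]
    rw [bind₁, aeval_monomial, Finsupp.prod_fintype _ _ (fun i => pow_zero _)]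
    rfl
  · rw [if_neg hdeg, map_zero]
    have hlt : a.degree < d := lt_of_le_of_ne hale hdeg
    refine Polynomial.coeff_eq_zero_of_natDegree_lt ?_
    refine lt_of_le_of_lt ?_ (Nat.mul_lt_mul_of_lt_of_le hlt le_rfl he)
    refine (Polynomial.natDegree_mul_le).trans ?_
    have h0 : (algebraMap k (Polynomial (MvPolynomial (Fin n) k)) (coeff a p)).natDegree
        = 0 := by
      rw [show (algebraMap k (Polynomial (MvPolynomial (Fin n) k))) (coeff a p)
        = Polynomial.C (MvPolynomial.C (coeff a p)) from rfl]
      exact Polynomial.natDegree_C _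
    rw [h0, zero_add]
    refine (Polynomial.natDegree_prod_le _ _).trans ?_
    rw [degree_eq_sum, Finset.sum_mul]
    exact Finset.sum_le_sum fun i _ =>
      (Polynomial.natDegree_pow_le).trans
        (Nat.mul_le_mul_left _ ((natDegree_Phi_le _).trans (le_mvDeg g i)))

lemma homComp_top_ne_zero {k : Type*} [CommSemiring k] {n : ℕ}
    {p : MvPolynomial (Fin n) k} (hp : p ≠ 0) :
    homogeneousComponent p.totalDegree p ≠ 0 := by
  obtain ⟨a, ha, hda⟩ := Finset.exists_mem_eq_sup p.support
    (support_nonempty.mpr hp) (fun s => s.sum fun _ e => e)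
  intro h
  have hcoeff : coeff a (homogeneousComponent p.totalDegree p) = coeff a p := by
    rw [coeff_homogeneousComponent, if_pos]
    rw [show a.degree = a.sum (fun _ e => e) from rfl]
    exact hda.symm
  rw [h, coeff_zero] at hcoeff
  exact (mem_support_iff.mp ha) hcoeff.symm

lemma eval_bind₁' {k : Type*} [CommSemiring k] {n : ℕ}
    (y : Fin n → k) (g : Fin n → MvPolynomial (Fin n) k) (p : MvPolynomial (Fin n) k) :
    MvPolynomial.eval y (bind₁ g p) =
      MvPolynomial.eval (fun i => MvPolynomial.eval y (g i)) p := by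
  have h : ∀ (q : MvPolynomial (Fin n) k) (z : Fin n → k),
      MvPolynomial.aeval z q = MvPolynomial.eval z q := fun q z => rfl
  rw [← h, aeval_bind₁]
  simp only [h]

theorem stmt_11 (k : Type*) [Field k] [IsAlgClosed k] (n : ℕ)
    (f finv : Fin n → MvPolynomial (Fin n) k)
    (hf1 : ∀ i, MvPolynomial.bind₁ f (finv i) = MvPolynomial.X i)
    (hf2 : ∀ i, MvPolynomial.bind₁ finv (f i) = MvPolynomial.X i)
    (hdf : 2 ≤ mvDeg f)
    -- `X_f ∩ I_f = ∅` : every point of `X_f` avoids the indeterminacy locus of `f`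
    (hreg : ∀ y : Fin n → k, (∃ i, MvPolynomial.eval y (topPart f i) ≠ 0) →
      ∃ j, MvPolynomial.eval (fun i => MvPolynomial.eval y (topPart f i))
        (topPart f j) ≠ 0) :
    ∀ m : ℕ, 1 ≤ m →
      mvDeg ((mvComp f)^[m] (fun i => MvPolynomial.X i)) = (mvDeg f) ^ m ∧
      -- `X_{f^m} ⊆ X_f` (stated on the level of affine cones)
      ∀ y : Fin n → k, ∃ w : Fin n → k,
        ∀ i, MvPolynomial.eval y
            (topPart ((mvComp f)^[m] (fun j => MvPolynomial.X j)) i) =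
          MvPolynomial.eval w (topPart f i) := by
  have huniv : (Finset.univ : Finset (Fin n)).Nonempty := by
    by_contra h
    rw [Finset.not_nonempty_iff_eq_empty] at h
    rw [mvDeg, h] at hdf
    simp at hdf
  obtain ⟨i₀, -, hi₀⟩ := Finset.exists_mem_eq_sup Finset.univ huniv
    (fun i => (f i).totalDegree)
  have hfi₀ : (f i₀).totalDegree = mvDeg f := hi₀.symm
  have hT0 : topPart f i₀ ≠ 0 := by
    rw [show topPart f i₀ = homogeneousComponent (mvDeg f) (f i₀) from rfl, ← hfi₀]
    refine homComp_top_ne_zero fun h0 => ?_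
    rw [h0, totalDegree_zero] at hfi₀
    omega
  set Q : ℕ → Fin n → MvPolynomial (Fin n) k :=
    fun m => (mvComp (topPart f))^[m] (topPart f) with hQdef
  have hQs : ∀ m i, Q (m + 1) i = bind₁ (Q m) (topPart f i) := by
    intro m i
    show ((mvComp (topPart f))^[m + 1] (topPart f)) i
      = bind₁ ((mvComp (topPart f))^[m] (topPart f)) (topPart f i)
    rw [Function.iterate_succ_apply']
    rfl
  have hW : ∀ m (y : Fin n → k), ∃ w, ∀ i,
      MvPolynomial.eval y (Q m i) = MvPolynomial.eval w (topPart f i) := by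
    intro m y
    cases m with
    | zero => exact ⟨y, fun i => rfl⟩
    | succ m => exact ⟨fun j => MvPolynomial.eval y (Q m j),
        fun i => by rw [hQs, eval_bind₁']⟩
  have hNZ : ∀ m, ∃ (y : Fin n → k) (i : Fin n),
      MvPolynomial.eval y (Q m i) ≠ 0 := by
    intro m
    induction m with
    | zero =>
      have : ∃ y : Fin n → k, MvPolynomial.eval y (topPart f i₀) ≠ 0 := by
        by_contra h
        push_neg at h
        exact hT0 (MvPolynomial.funext fun x => by rw [h x, map_zero])
      obtain ⟨y, hy⟩ := this
      exact ⟨y, i₀, hy⟩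
    | succ m ih =>
      obtain ⟨y, i, hy⟩ := ih
      obtain ⟨w, hw⟩ := hW m y
      have hwi : MvPolynomial.eval w (topPart f i) ≠ 0 := by rw [← hw]; exact hy
      obtain ⟨j, hj⟩ := hreg w ⟨i, hwi⟩
      refine ⟨y, j, ?_⟩
      rw [hQs, eval_bind₁', show (fun j' => MvPolynomial.eval y (Q m j'))
        = fun i => MvPolynomial.eval w (topPart f i) from funext hw]
      exact hj
  set F : ℕ → Fin n → MvPolynomial (Fin n) k :=
    fun m => (mvComp f)^[m] (fun i => MvPolynomial.X i) with hFdef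
  have hF1 : F 1 = f := by
    funext i
    show bind₁ (fun i => (MvPolynomial.X i : MvPolynomial (Fin n) k)) (f i) = f i
    rw [show (fun i => (MvPolynomial.X i : MvPolynomial (Fin n) k)) = MvPolynomial.X
      from rfl, bind₁_X_left]
    rfl
  have hMain : ∀ m, mvDeg (F (m + 1)) = mvDeg f ^ (m + 1) ∧
      ∀ i, topPart (F (m + 1)) i = Q m i := by
    intro m
    induction m with
    | zero =>
      rw [hF1]
      exact ⟨(pow_one _).symm, fun i => rfl⟩
    | succ m ih =>
      obtain ⟨ihdeg, ihtop⟩ := ih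
      have hge : 1 ≤ mvDeg (F (m + 1)) := by
        rw [ihdeg]
        exact Nat.one_le_pow _ _ (by omega)
      have hkey : ∀ j, homogeneousComponent (mvDeg f * mvDeg (F (m + 1)))
          (bind₁ (F (m + 1)) (f j)) = Q (m + 1) j := by
        intro j
        rw [homComp_bind₁ _ _ (mvDeg f) (le_mvDeg f j) hge,
          show topPart (F (m + 1)) = Q m from funext ihtop, hQs]
        rfl
      obtain ⟨y, j₀, hy⟩ := hNZ (m + 1)
      have hQne : Q (m + 1) j₀ ≠ 0 := fun h => hy (by rw [h, map_zero])
      have hub : ∀ j, (bind₁ (F (m + 1)) (f j)).totalDegree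
          ≤ mvDeg f * mvDeg (F (m + 1)) :=
        fun j => (totalDegree_bind₁_le_s11 _ _).trans
          (Nat.mul_le_mul_right _ (le_mvDeg f j))
      have hlb : mvDeg f * mvDeg (F (m + 1))
          ≤ (bind₁ (F (m + 1)) (f j₀)).totalDegree := by
        by_contra h
        push_neg at h
        have h2 := homogeneousComponent_eq_zero _ _ h
        rw [hkey j₀] at h2
        exact hQne h2
      have hFs : F (m + 2) = mvComp f (F (m + 1)) := by
        rw [hFdef]
        exact Function.iterate_succ_apply' _ _ _
      have hFsi : ∀ i, F (m + 2) i = bind₁ (F (m + 1)) (f i) := by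
        intro i; rw [hFs]; rfl
      have hdeg2 : mvDeg (F (m + 2)) = mvDeg f * mvDeg (F (m + 1)) := by
        refine le_antisymm (Finset.sup_le fun j _ => ?_) ?_
        · rw [hFsi j]; exact hub j
        · refine hlb.trans ?_
          rw [← hFsi j₀]
          exact Finset.le_sup (f := fun j => ((F (m + 2)) j).totalDegree)
            (Finset.mem_univ j₀)
      constructor
      · rw [hdeg2, ihdeg, pow_succ]
        ring
      · intro i
        rw [show topPart (F (m + 2)) i
          = homogeneousComponent (mvDeg (F (m + 2))) (F (m + 2) i) from rfl,
          hdeg2, hFsi i, hkey i]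
  intro m hm
  obtain ⟨m', rfl⟩ : ∃ m', m = m' + 1 := ⟨m - 1, by omega⟩
  obtain ⟨hdeg, htop⟩ := hMain m'
  refine ⟨hdeg, fun y => ?_⟩
  obtain ⟨w, hw⟩ := hW m' y
  exact ⟨w, fun i => by rw [htop i]; exact hw i⟩
end

section
/- Let k be a field and f, g polynomial automorphisms of A^n_k of degree ≥ 2 such that the indeterminacy loci at infinity satisfy I_g ∩ I_{f⁻¹} = ∅. Then deg(g∘f) = deg(g)·deg(f). -/
open MvPolynomial

section Aux
variable {k : Type*} [CommSemiring k] {n : ℕ}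

lemma aux_le_mvDeg (f : Fin n → MvPolynomial (Fin n) k) (i : Fin n) :
    (f i).totalDegree ≤ mvDeg f :=
  Finset.le_sup (f := fun i => (f i).totalDegree) (Finset.mem_univ i)

lemma aux_totalDegree_bind₁_le (f : Fin n → MvPolynomial (Fin n) k)
    (p : MvPolynomial (Fin n) k) :
    (bind₁ f p).totalDegree ≤ p.totalDegree * mvDeg f := by
  conv_lhs => rw [p.as_sum, map_sum]
  apply totalDegree_finsetSum_le
  intro v hv
  rw [bind₁_monomial]
  refine (totalDegree_mul _ _).trans ?_
  rw [totalDegree_C, zero_add]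
  refine (totalDegree_finset_prod _ _).trans ?_
  calc ∑ i ∈ v.support, (f i ^ v i).totalDegree
      ≤ ∑ i ∈ v.support, v i * mvDeg f := by
        refine Finset.sum_le_sum fun i _ => (totalDegree_pow _ _).trans ?_
        exact Nat.mul_le_mul_left _ (aux_le_mvDeg f i)
    _ = (∑ i ∈ v.support, v i) * mvDeg f := by rw [Finset.sum_mul]
    _ ≤ p.totalDegree * mvDeg f := Nat.mul_le_mul_right _ (le_totalDegree hv)

lemma aux_hc_mul {p q : MvPolynomial (Fin n) k} {a b : ℕ}
    (hp : p.totalDegree ≤ a) (hq : q.totalDegree ≤ b) :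
    homogeneousComponent (a + b) (p * q) =
      homogeneousComponent a p * homogeneousComponent b q := by
  classical
  ext d
  rw [coeff_homogeneousComponent, coeff_mul, coeff_mul]
  split_ifs with hd
  · refine Finset.sum_congr rfl fun x hx => ?_
    rw [Finset.HasAntidiagonal.mem_antidiagonal] at hx
    rw [coeff_homogeneousComponent, coeff_homogeneousComponent]
    have hsum : x.1.degree + x.2.degree = a + b := by
      rw [← hd, ← hx]
      simp [Finsupp.degree_eq_weight_one, map_add]
    by_cases h1 : x.1.degree = a
    · have h2 : x.2.degree = b := by omega
      rw [if_pos h1, if_pos h2]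
    · rw [if_neg h1]
      rcases le_or_gt x.1.degree a with hle | hgt
      · -- x.1.degree < a, so x.2.degree > b, coeff x.2 q = 0
        have h2 : b < x.2.degree := by omega
        have : coeff x.2 q = 0 := by
          apply coeff_eq_zero_of_totalDegree_lt
          have : x.2.degree = ∑ i ∈ x.2.support, x.2 i := rfl
          omega
        rw [this, mul_zero, zero_mul]
      · have : coeff x.1 p = 0 := by
          apply coeff_eq_zero_of_totalDegree_lt
          have : x.1.degree = ∑ i ∈ x.1.support, x.1 i := rfl
          omega
        rw [this, zero_mul, zero_mul]
  · -- degree d ≠ a+b : RHS coefficient is 0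
    have hhom : (homogeneousComponent a p * homogeneousComponent b q).IsHomogeneous (a + b) :=
      (homogeneousComponent_isHomogeneous a p).mul (homogeneousComponent_isHomogeneous b q)
    rw [← coeff_mul]
    exact (hhom.coeff_eq_zero hd).symm


lemma aux_hc_prod {ι : Type*} (s : Finset ι) (F : ι → MvPolynomial (Fin n) k)
    (e : ι → ℕ) (h : ∀ i ∈ s, (F i).totalDegree ≤ e i) :
    homogeneousComponent (∑ i ∈ s, e i) (∏ i ∈ s, F i) =
      ∏ i ∈ s, homogeneousComponent (e i) (F i) := by
  classical
  induction s using Finset.induction_on with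
  | empty =>
      simp [homogeneousComponent_of_mem
        ((mem_homogeneousSubmodule 0 _).mpr (isHomogeneous_one _ _))]
  | @insert a s ha ih =>
      rw [Finset.sum_insert ha, Finset.prod_insert ha, Finset.prod_insert ha,
        aux_hc_mul (h a (Finset.mem_insert_self a s))
          ((totalDegree_finset_prod s F).trans
            (Finset.sum_le_sum fun i hi => h i (Finset.mem_insert_of_mem hi))),
        ih fun i hi => h i (Finset.mem_insert_of_mem hi)]

lemma aux_hc_pow {u : MvPolynomial (Fin n) k} {d : ℕ} (hu : u.totalDegree ≤ d) (m : ℕ) :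
    homogeneousComponent (m * d) (u ^ m) = homogeneousComponent d u ^ m := by
  induction m with
  | zero =>
      simp [homogeneousComponent_of_mem
        ((mem_homogeneousSubmodule 0 _).mpr (isHomogeneous_one _ _))]
  | succ m ih =>
      rw [pow_succ, pow_succ, Nat.succ_mul,
        aux_hc_mul ((totalDegree_pow u m).trans (Nat.mul_le_mul_left m hu)) hu, ih]


lemma aux_hc_bind₁_monomial (f : Fin n → MvPolynomial (Fin n) k)
    (v : Fin n →₀ ℕ) (c : k) :
    homogeneousComponent (v.degree * mvDeg f) (bind₁ f (monomial v c)) =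
      bind₁ (topPart f) (monomial v c) := by
  rw [bind₁_monomial, bind₁_monomial]
  have hdeg : v.degree * mvDeg f = 0 + ∑ i ∈ v.support, v i * mvDeg f := by
    rw [zero_add, ← Finset.sum_mul]; rfl
  rw [hdeg,
    aux_hc_mul (le_of_eq (totalDegree_C c))
      (show (∏ i ∈ v.support, f i ^ v i).totalDegree ≤ ∑ i ∈ v.support, v i * mvDeg f from
        (totalDegree_finset_prod _ _).trans (Finset.sum_le_sum fun i _ =>
          (totalDegree_pow _ _).trans (Nat.mul_le_mul_left _ (aux_le_mvDeg f i)))),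
    aux_hc_prod _ _ (fun i => v i * mvDeg f) (fun i _ =>
        (totalDegree_pow _ _).trans (Nat.mul_le_mul_left _ (aux_le_mvDeg f i)))]
  congr 1
  · simp
  · exact Finset.prod_congr rfl fun i _ => aux_hc_pow (aux_le_mvDeg f i) (v i)

lemma aux_hc_bind₁ (f : Fin n → MvPolynomial (Fin n) k) (p : MvPolynomial (Fin n) k)
    (hd : 1 ≤ mvDeg f) {e : ℕ} (hp : p.totalDegree ≤ e) :
    homogeneousComponent (e * mvDeg f) (bind₁ f p) =
      bind₁ (topPart f) (homogeneousComponent e p) := by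
  classical
  conv_lhs => rw [p.as_sum]
  rw [map_sum, map_sum, homogeneousComponent_apply, map_sum]
  rw [← Finset.sum_filter_add_sum_filter_not p.support (fun v => v.degree = e)
    (fun v => homogeneousComponent (e * mvDeg f) (bind₁ f (monomial v (coeff v p))))]
  have h2 : ∑ v ∈ p.support.filter (fun v => ¬ v.degree = e),
      homogeneousComponent (e * mvDeg f) (bind₁ f (monomial v (coeff v p))) = 0 := by
    apply Finset.sum_eq_zero
    intro v hv
    rw [Finset.mem_filter] at hv
    apply homogeneousComponent_eq_zero
    have hle : v.degree ≤ p.totalDegree := le_totalDegree hv.1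
    have h1 : v.degree < e := lt_of_le_of_ne (hle.trans hp) hv.2
    calc (bind₁ f (monomial v (coeff v p))).totalDegree
        ≤ (monomial v (coeff v p)).totalDegree * mvDeg f := aux_totalDegree_bind₁_le ..
      _ ≤ v.degree * mvDeg f := Nat.mul_le_mul_right _ (totalDegree_monomial_le ..)
      _ < e * mvDeg f := Nat.mul_lt_mul_of_pos_right h1 (by omega)
  rw [h2, add_zero]
  apply Finset.sum_congr rfl
  intro v hv
  rw [Finset.mem_filter] at hv
  rw [← hv.2]
  exact aux_hc_bind₁_monomial f v (coeff v p)


lemma aux_eval_bind₁ (y : Fin n → k) (F : Fin n → MvPolynomial (Fin n) k)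
    (p : MvPolynomial (Fin n) k) :
    eval y (bind₁ F p) = eval (fun j => eval y (F j)) p :=
  eval₂Hom_bind₁ (RingHom.id k) y F p

lemma aux_hc_totalDegree_ne_zero {p : MvPolynomial (Fin n) k} (hp : p ≠ 0) :
    homogeneousComponent p.totalDegree p ≠ 0 := by
  obtain ⟨v, hv, hsum⟩ := Finset.exists_mem_eq_sup p.support
    (Finset.nonempty_iff_ne_empty.mpr (mt MvPolynomial.support_eq_empty.mp hp)) (fun s => s.sum fun _ e => e)
  have hdeg : v.degree = p.totalDegree := by
    rw [MvPolynomial.totalDegree, hsum]; rfl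
  intro h0
  have hc : coeff v (homogeneousComponent p.totalDegree p) = coeff v p := by
    rw [coeff_homogeneousComponent, if_pos hdeg]
  rw [h0, coeff_zero] at hc
  exact (mem_support_iff.mp hv) hc.symm

end Aux

theorem stmt_12 (k : Type*) [Field k] [IsAlgClosed k] (n : ℕ)
    (f finv g ginv : Fin n → MvPolynomial (Fin n) k)
    (hf1 : ∀ i, MvPolynomial.bind₁ f (finv i) = MvPolynomial.X i)
    (hf2 : ∀ i, MvPolynomial.bind₁ finv (f i) = MvPolynomial.X i)
    (hg1 : ∀ i, MvPolynomial.bind₁ g (ginv i) = MvPolynomial.X i)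
    (hg2 : ∀ i, MvPolynomial.bind₁ ginv (g i) = MvPolynomial.X i)
    (hdf : 2 ≤ mvDeg f) (hdg : 2 ≤ mvDeg g)
    -- `I_g ∩ I_{f⁻¹} = ∅` at infinity
    (hsep : ∀ y : Fin n → k, y ≠ 0 →
      (∃ i, MvPolynomial.eval y (topPart g i) ≠ 0) ∨
      (∃ i, MvPolynomial.eval y (topPart finv i) ≠ 0)) :
    mvDeg (mvComp g f) = mvDeg g * mvDeg f := by

  classical
  have hd1 : 1 ≤ mvDeg f := by omega
  have hne : (Finset.univ : Finset (Fin n)).Nonempty := by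
    by_contra h
    rw [Finset.not_nonempty_iff_eq_empty] at h
    have : mvDeg f = 0 := by rw [mvDeg, h, Finset.sup_empty]; rfl
    omega
  obtain ⟨j0, _⟩ := hne
  -- `finv` has degree at least 1
  have hdfinv : 1 ≤ mvDeg finv := by
    by_contra h
    push_neg at h
    have h0 : mvDeg finv = 0 := by omega
    have h1 := aux_totalDegree_bind₁_le f (finv j0)
    rw [hf1 j0, totalDegree_X] at h1
    have h2 : (finv j0).totalDegree ≤ mvDeg finv := aux_le_mvDeg finv j0
    have h3 : (finv j0).totalDegree = 0 := by omega
    rw [h3, zero_mul] at h1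
    omega
  -- the top part of `finv` composed with the top part of `f` vanishes
  have key1 : ∀ j, bind₁ (topPart f) (topPart finv j) = 0 := by
    intro j
    have hth := aux_hc_bind₁ f (finv j) hd1 (aux_le_mvDeg finv j)
    rw [hf1 j] at hth
    show bind₁ (topPart f) (homogeneousComponent (mvDeg finv) (finv j)) = 0
    rw [← hth]
    apply homogeneousComponent_eq_zero
    rw [totalDegree_X]
    have : 1 * 2 ≤ mvDeg finv * mvDeg f := Nat.mul_le_mul hdfinv hdf
    omega
  -- find a point where the top part of `f` doesn't vanish
  obtain ⟨i0, _, hi0⟩ := Finset.exists_mem_eq_sup Finset.univ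
    ⟨j0, Finset.mem_univ j0⟩ (fun i => (f i).totalDegree)
  have hfne : f i0 ≠ 0 := by
    intro h
    rw [h, totalDegree_zero] at hi0
    have : mvDeg f = 0 := hi0
    omega
  have hFne : topPart f i0 ≠ 0 := by
    show homogeneousComponent (mvDeg f) (f i0) ≠ 0
    have : mvDeg f = (f i0).totalDegree := hi0
    rw [this]
    exact aux_hc_totalDegree_ne_zero hfne
  have hy : ∃ y : Fin n → k, eval y (topPart f i0) ≠ 0 := by
    by_contra h
    push_neg at h
    exact hFne (MvPolynomial.funext fun x => by rw [h x, map_zero])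
  obtain ⟨y0, hy0⟩ := hy
  set z : Fin n → k := fun j => eval y0 (topPart f j) with hz
  have hzne : z ≠ 0 := fun h => hy0 (by simpa using congrFun h i0)
  -- separate the two cases
  have hGFne : ∃ i, bind₁ (topPart f) (topPart g i) ≠ 0 := by
    rcases hsep z hzne with ⟨i, hi⟩ | ⟨j, hj⟩
    · refine ⟨i, fun h => hi ?_⟩
      rw [show eval z (topPart g i) = eval y0 (bind₁ (topPart f) (topPart g i)) from
        (aux_eval_bind₁ y0 (topPart f) (topPart g i)).symm, h, map_zero]
    · exfalso
      apply hj
      rw [show eval z (topPart finv j) = eval y0 (bind₁ (topPart f) (topPart finv j)) from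
        (aux_eval_bind₁ y0 (topPart f) (topPart finv j)).symm, key1 j, map_zero]
  obtain ⟨i, hGF⟩ := hGFne
  have hkey : homogeneousComponent (mvDeg g * mvDeg f) (bind₁ f (g i)) =
      bind₁ (topPart f) (topPart g i) :=
    aux_hc_bind₁ f (g i) hd1 (aux_le_mvDeg g i)
  have hlow : mvDeg g * mvDeg f ≤ (bind₁ f (g i)).totalDegree := by
    by_contra h
    push_neg at h
    exact hGF (by rw [← hkey]; exact homogeneousComponent_eq_zero _ _ h)
  apply le_antisymm
  · show Finset.univ.sup (fun i => ((mvComp g f) i).totalDegree) ≤ mvDeg g * mvDeg f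
    apply Finset.sup_le
    intro b _
    show (bind₁ f (g b)).totalDegree ≤ mvDeg g * mvDeg f
    exact (aux_totalDegree_bind₁_le f (g b)).trans
      (Nat.mul_le_mul_right _ (aux_le_mvDeg g b))
  · exact le_trans hlow
      (Finset.le_sup (f := fun i => ((mvComp g f) i).totalDegree) (Finset.mem_univ i))
end
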